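/- arXiv:2101.00791 — 5 statements merged into one kernel-verified Lean document; each statement's English description precedes it below -/
import Mathlib

section
/- Let a, b be orthonormal vectors in ℝ³, let 0 < t₁ < π, and let γ(t) := (cos t) a + (sin t) b for t ∈ [0, t₁] (a unit-speed geodesic on the unit sphere with γ(0) + γ(t) ≠ 0 for all t ∈ [0, t₁]). Let W₀ ∈ ℝ³ satisfy ⟨W₀, a⟩ = 0, and define V(t) := R_{γ(0)→γ(t)}(W₀) for t ∈ (0, t₁] and V(0) := W₀. Then V is differentiable on (0, t₁) and its derivative is normal to the sphere at γ(t): V′(t) = ⟨V′(t), γ(t)⟩ γ(t) for all t ∈ (0, t₁); that is, V is a parallel vector field along the geodesic γ. -/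
open Matrix Set
open scoped BigOperators

noncomputable section

/-- The Euclidean norm on `ℝ³`, realized as `Fin 3 → ℝ`. -/
def enorm3 (a : Fin 3 → ℝ) : ℝ := Real.sqrt (a ⬝ᵥ a)

/-- The cross product on `ℝ³`. -/
def cross3 (a b : Fin 3 → ℝ) : Fin 3 → ℝ :=
  ![a 1 * b 2 - a 2 * b 1, a 2 * b 0 - a 0 * b 2, a 0 * b 1 - a 1 * b 0]

/-- The unit vector `u = (z₁ × z₂)/‖z₁ × z₂‖`. -/
def uvec3 (z₁ z₂ : Fin 3 → ℝ) : Fin 3 → ℝ := (enorm3 (cross3 z₁ z₂))⁻¹ • cross3 z₁ z₂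

/-- The rotation matrix `R(z₁,z₂) = ⟨z₁,z₂⟩ I + z₂ z₁ᵀ − z₁ z₂ᵀ + (1 − ⟨z₁,z₂⟩) u uᵀ`. -/
def rotMatrix (z₁ z₂ : Fin 3 → ℝ) : Matrix (Fin 3) (Fin 3) ℝ :=
  (z₁ ⬝ᵥ z₂) • (1 : Matrix (Fin 3) (Fin 3) ℝ)
    + vecMulVec z₂ z₁ - vecMulVec z₁ z₂
    + (1 - z₁ ⬝ᵥ z₂) • vecMulVec (uvec3 z₁ z₂) (uvec3 z₁ z₂)

/-- `R_{z₁→z₂}(v)`, with the convention `R_{z→z} = I`. -/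
def rotApply (z₁ z₂ v : Fin 3 → ℝ) : Fin 3 → ℝ :=
  if z₁ = z₂ then v else (rotMatrix z₁ z₂).mulVec v

lemma vmv3 (x y v : Fin 3 → ℝ) : (vecMulVec x y) *ᵥ v = (y ⬝ᵥ v) • x := by
  funext i
  simp [vecMulVec, mulVec, dotProduct, Fin.sum_univ_three]
  ring

lemma lagrange3 (a b : Fin 3 → ℝ) (ha : a ⬝ᵥ a = 1) (hb : b ⬝ᵥ b = 1)
    (hab : a ⬝ᵥ b = 0) : cross3 a b ⬝ᵥ cross3 a b = 1 := by
  simp only [dotProduct, Fin.sum_univ_three] at ha hb hab ⊢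
  simp [cross3]
  linear_combination (b 0 * b 0 + b 1 * b 1 + b 2 * b 2) * ha + hb
    - (a 0 * b 0 + a 1 * b 1 + a 2 * b 2) * hab

lemma decomp3 (a b w : Fin 3 → ℝ) (ha : a ⬝ᵥ a = 1) (hb : b ⬝ᵥ b = 1)
    (hab : a ⬝ᵥ b = 0) (haw : a ⬝ᵥ w = 0) :
    w = (b ⬝ᵥ w) • b + (cross3 a b ⬝ᵥ w) • cross3 a b := by
  simp only [dotProduct, Fin.sum_univ_three] at ha hb hab haw
  funext i
  fin_cases i
  · simp [cross3, dotProduct, Fin.sum_univ_three]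
    linear_combination
      (-(w 0) * (b 0 * b 0 + b 1 * b 1 + b 2 * b 2)
        + (b 0 * w 0 + b 1 * w 1 + b 2 * w 2) * b 0) * ha + (-(w 0)) * hb
      + ((w 0) * (a 0 * b 0 + a 1 * b 1 + a 2 * b 2)
        - (a 0 * w 0 + a 1 * w 1 + a 2 * w 2) * b 0
        - (b 0 * w 0 + b 1 * w 1 + b 2 * w 2) * a 0) * hab
      + ((b 0 * b 0 + b 1 * b 1 + b 2 * b 2) * a 0) * haw
  · simp [cross3, dotProduct, Fin.sum_univ_three]
    linear_combination
      (-(w 1) * (b 0 * b 0 + b 1 * b 1 + b 2 * b 2)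
        + (b 0 * w 0 + b 1 * w 1 + b 2 * w 2) * b 1) * ha + (-(w 1)) * hb
      + ((w 1) * (a 0 * b 0 + a 1 * b 1 + a 2 * b 2)
        - (a 0 * w 0 + a 1 * w 1 + a 2 * w 2) * b 1
        - (b 0 * w 0 + b 1 * w 1 + b 2 * w 2) * a 1) * hab
      + ((b 0 * b 0 + b 1 * b 1 + b 2 * b 2) * a 1) * haw
  · simp [cross3, dotProduct, Fin.sum_univ_three]
    linear_combination
      (-(w 2) * (b 0 * b 0 + b 1 * b 1 + b 2 * b 2)
        + (b 0 * w 0 + b 1 * w 1 + b 2 * w 2) * b 2) * ha + (-(w 2)) * hb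
      + ((w 2) * (a 0 * b 0 + a 1 * b 1 + a 2 * b 2)
        - (a 0 * w 0 + a 1 * w 1 + a 2 * w 2) * b 2
        - (b 0 * w 0 + b 1 * w 1 + b 2 * w 2) * a 2) * hab
      + ((b 0 * b 0 + b 1 * b 1 + b 2 * b 2) * a 2) * haw


/-- Along the unit-speed spherical geodesic `γ(t) = (cos t) a + (sin t) b`
(with `a, b` orthonormal, `0 < t₁ < π`), the vector field
`V(t) = R_{γ(0)→γ(t)}(W₀)` (with `V(0) = W₀`, `⟨W₀,a⟩ = 0`) is differentiable on
`(0,t₁)` and its derivative is normal to the sphere at `γ(t)`; i.e. `V` is parallel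
along `γ`. -/
theorem rot_parallel_transport (a b : Fin 3 → ℝ)
    (ha : a ⬝ᵥ a = 1) (hb : b ⬝ᵥ b = 1) (hab : a ⬝ᵥ b = 0)
    (t₁ : ℝ) (ht₁ : 0 < t₁) (ht₁' : t₁ < Real.pi)
    (γ : ℝ → Fin 3 → ℝ)
    (hγ : ∀ t, γ t = Real.cos t • a + Real.sin t • b)
    (hγanti : ∀ t ∈ Set.Icc 0 t₁, γ 0 + γ t ≠ 0)
    (W₀ : Fin 3 → ℝ) (hW₀ : W₀ ⬝ᵥ a = 0)
    (V : ℝ → Fin 3 → ℝ)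
    (hV : ∀ t ∈ Set.Ioc 0 t₁, V t = rotApply (γ 0) (γ t) W₀)
    (hV0 : V 0 = W₀) :
    ∀ t ∈ Set.Ioo 0 t₁, DifferentiableAt ℝ V t ∧
      deriv V t = ((deriv V t) ⬝ᵥ (γ t)) • γ t := by
  have hγ0 : γ 0 = a := by rw [hγ]; simp
  have haW : a ⬝ᵥ W₀ = 0 := by rw [dotProduct_comm]; exact hW₀
  set n : Fin 3 → ℝ := cross3 a b with hn
  set β : ℝ := b ⬝ᵥ W₀ with hβ
  set ν : ℝ := n ⬝ᵥ W₀ with hν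
  have hnn : n ⬝ᵥ n = 1 := lagrange3 a b ha hb hab
  have hdec : W₀ = β • b + ν • n := decomp3 a b W₀ ha hb hab haW
  set f : ℝ → Fin 3 → ℝ := fun s => (Real.cos s * β) • b - (Real.sin s * β) • a + ν • n
    with hf
  have hVf : ∀ s ∈ Set.Ioo 0 t₁, V s = f s := by
    intro s hs
    have hsin : 0 < Real.sin s := Real.sin_pos_of_pos_of_lt_pi hs.1 (hs.2.trans ht₁')
    have haγ : a ⬝ᵥ γ s = Real.cos s := by
      rw [hγ]; simp [dotProduct_add, dotProduct_smul, ha, hab]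
    have hne : γ 0 ≠ γ s := by
      intro h
      have h1 : a ⬝ᵥ γ s = 1 := by rw [← h, hγ0, ha]
      have h2 : Real.cos s = 1 := by rw [← haγ, h1]
      have hpi := Real.pi_pos
      rw [Real.cos_eq_one_iff_of_lt_of_lt (by linarith [hs.1, hs.2, ht₁'])
        (by linarith [hs.2, ht₁'])] at h2
      exact absurd h2 (ne_of_gt hs.1)
    have hγW : γ s ⬝ᵥ W₀ = Real.sin s * β := by
      rw [hγ]; simp [add_dotProduct, smul_dotProduct, haW, hβ]
    have hcr : cross3 a (γ s) = Real.sin s • n := by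
      funext i
      fin_cases i <;> (simp [cross3, hγ, hn]; ring)
    have henorm : enorm3 (cross3 a (γ s)) = Real.sin s := by
      rw [hcr]
      unfold enorm3
      rw [smul_dotProduct, dotProduct_smul, hnn]
      simp only [smul_eq_mul, mul_one, ← sq]
      exact Real.sqrt_sq hsin.le
    have hu : uvec3 a (γ s) = n := by
      unfold uvec3
      rw [henorm, hcr, smul_smul, inv_mul_cancel₀ (ne_of_gt hsin), one_smul]
    rw [hV s ⟨hs.1, hs.2.le⟩, rotApply, hγ0, if_neg (hγ0 ▸ hne), rotMatrix, hu]
    rw [add_mulVec, sub_mulVec, add_mulVec, smul_mulVec, one_mulVec,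
      vmv3, vmv3, smul_mulVec, vmv3]
    rw [haγ, haW, hγW, ← hν]
    rw [hf]
    simp only
    rw [hdec]
    module
  intro t ht
  have hVeq : V =ᶠ[nhds t] f :=
    Filter.eventuallyEq_of_mem (isOpen_Ioo.mem_nhds ht) hVf
  have h1 : HasDerivAt (fun s => (Real.cos s * β) • b) ((-Real.sin t * β) • b) t :=
    ((Real.hasDerivAt_cos t).mul_const β).smul_const b
  have h2 : HasDerivAt (fun s => (Real.sin s * β) • a) ((Real.cos t * β) • a) t :=
    ((Real.hasDerivAt_sin t).mul_const β).smul_const a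
  have h3 : HasDerivAt f ((-Real.sin t * β) • b - (Real.cos t * β) • a + 0) t :=
    (h1.sub h2).add (hasDerivAt_const t (ν • n))
  have hfd : HasDerivAt f ((-β) • γ t) t := by
    convert h3 using 1
    rw [hγ]; module
  have hVd : HasDerivAt V ((-β) • γ t) t := hfd.congr_of_eventuallyEq hVeq
  have hderV : deriv V t = (-β) • γ t := hVd.deriv
  have hba : b ⬝ᵥ a = 0 := by rw [dotProduct_comm]; exact hab
  have hγγ : γ t ⬝ᵥ γ t = 1 := by
    rw [hγ]
    simp [add_dotProduct, dotProduct_add, smul_dotProduct, dotProduct_smul,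
      ha, hb, hab, hba]
    linear_combination Real.sin_sq_add_cos_sq t
  refine ⟨hVd.differentiableAt, ?_⟩
  rw [hderV, smul_dotProduct, hγγ, smul_eq_mul, mul_one]
end
end

section
/- Let N ≥ 1, σ > 0, and let ψ : [0,2] → ℝ be continuous and nonnegative. Suppose x_i, v_i : [0,∞) → ℝ³ (1 ≤ i ≤ N) are differentiable curves with x_i(t) ≠ 0 and x_i(t) × x_k(t) ≠ 0 for all i ≠ k and t ≥ 0, which solve the system ẋ_i = v_i, v̇_i = λ_i x_i + (1/N) Σ_{k=1}^N ψ(‖x_i − x_k‖)(R_{x_k→x_i}(v_k) − v_i) + (σ/N) Σ_{k=1}^N (x_k − x_i), where λ_i := −‖v_i‖²/‖x_i‖² − (σ/N) Σ_{k=1}^N ⟨x_k − x_i, x_i⟩/⟨x_i, x_i⟩ and R_{z→z} := I. If the initial data satisfy ⟨v_i(0), x_i(0)⟩ = 0 and ‖x_i(0)‖ = 1 for all 1 ≤ i ≤ N, then for all t ≥ 0 and all 1 ≤ i ≤ N one has ⟨v_i(t), x_i(t)⟩ = 0 and ‖x_i(t)‖ = 1. -/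
open Matrix Set
open scoped BigOperators

noncomputable section

/-! ### Auxiliary lemmas -/

lemma si_dot3_nonneg (a : Fin 3 → ℝ) : 0 ≤ a ⬝ᵥ a := by
  apply Finset.sum_nonneg; intro i _; exact mul_self_nonneg _

lemma si_enorm3_sq (a : Fin 3 → ℝ) : enorm3 a ^ 2 = a ⬝ᵥ a := by
  rw [enorm3, Real.sq_sqrt (si_dot3_nonneg a)]

lemma si_dot3_pos {a : Fin 3 → ℝ} (ha : a ≠ 0) : 0 < a ⬝ᵥ a := by
  rcases (si_dot3_nonneg a).lt_or_eq with h | h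
  · exact h
  · exfalso; apply ha; funext j
    have := Finset.sum_eq_zero_iff_of_nonneg (fun i _ => mul_self_nonneg (a i)) |>.mp h.symm
    have hj := this j (Finset.mem_univ j)
    have := mul_self_eq_zero.mp hj
    simpa using this

lemma si_enorm3_eq_one_iff {a : Fin 3 → ℝ} : enorm3 a = 1 ↔ a ⬝ᵥ a = 1 := by
  rw [enorm3, Real.sqrt_eq_one]

lemma si_hasDerivAt_dot {f g : ℝ → Fin 3 → ℝ} {f' g' : Fin 3 → ℝ} {t : ℝ}
    (hf : HasDerivAt f f' t) (hg : HasDerivAt g g' t) :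
    HasDerivAt (fun s => f s ⬝ᵥ g s) (f' ⬝ᵥ g t + f t ⬝ᵥ g') t := by
  have h1 : ∀ j, HasDerivAt (fun s => f s j) (f' j) t := fun j => hasDerivAt_pi.mp hf j
  have h2 : ∀ j, HasDerivAt (fun s => g s j) (g' j) t := fun j => hasDerivAt_pi.mp hg j
  have : HasDerivAt (fun s => ∑ j, f s j * g s j)
      (∑ j, (f' j * g t j + f t j * g' j)) t := by
    apply HasDerivAt.fun_sum
    intro j _
    exact (h1 j).mul (h2 j)
  simpa [dotProduct, Finset.sum_add_distrib] using this

lemma si_sum_dot3 {ι : Type*} (s : Finset ι) (f : ι → Fin 3 → ℝ) (w : Fin 3 → ℝ) :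
    (∑ k ∈ s, f k) ⬝ᵥ w = ∑ k ∈ s, f k ⬝ᵥ w := by
  simp only [dotProduct, Finset.sum_apply, Finset.sum_mul]
  rw [Finset.sum_comm]

lemma si_rot_dot (z₁ z₂ w : Fin 3 → ℝ) :
    rotApply z₁ z₂ w ⬝ᵥ z₂ = if z₁ = z₂ then w ⬝ᵥ z₂ else (z₂ ⬝ᵥ z₂) * (w ⬝ᵥ z₁) := by
  rw [rotApply]
  split
  · rfl
  · simp only [rotMatrix, uvec3, Matrix.mulVec, dotProduct, cross3,
      Fin.sum_univ_three, Matrix.add_apply, Matrix.sub_apply, Matrix.smul_apply,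
      Matrix.one_apply, Matrix.vecMulVec_apply, Pi.smul_apply, smul_eq_mul, Matrix.cons_val]
    norm_num [Fin.ext_iff]
    ring

lemma si_lagrange3 (a b : Fin 3 → ℝ) :
    cross3 a b ⬝ᵥ cross3 a b = (a ⬝ᵥ a) * (b ⬝ᵥ b) - (a ⬝ᵥ b) ^ 2 := by
  simp only [cross3, dotProduct, Fin.sum_univ_three, Matrix.cons_val]
  norm_num
  ring

lemma si_cross3_self (a : Fin 3 → ℝ) : cross3 a a = 0 := by
  funext j
  fin_cases j <;> simp [cross3] <;> ring

lemma si_habs (Eu a b : ℝ) (ha : a^2 ≤ Eu) (hb : b^2 ≤ Eu) : |a*b| ≤ Eu := by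
  rw [abs_mul]
  nlinarith [sq_abs a, sq_abs b, sq_nonneg (|a| - |b|), abs_nonneg a, abs_nonneg b]

lemma si_Wbound (n : ℕ) (hn : 1 ≤ n) (c d z : Fin n → ℝ) (yi : ℝ) (i : Fin n)
    (M B Eu : ℝ) (hM : 0 ≤ M) (hB : 0 ≤ B) (hE : 0 ≤ Eu)
    (hc : ∀ k, |c k| ≤ M) (hzB : ∀ k, |z k| ≤ B)
    (hsqz : ∀ k, (z k)^2 ≤ Eu) (hsqy : (yi - 1)^2 ≤ Eu)
    (hd : ∀ k, k ≠ i → d k = yi * z k) (hdi : d i = z i) :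
    |z i * ((n:ℝ)⁻¹ * ∑ k, c k * (d k - z i))| ≤ M * (B + 2) * Eu := by
  have hn0 : (n:ℝ) ≠ 0 := Nat.cast_ne_zero.mpr (by omega)
  have hterm : ∀ k, |z i * (c k * (d k - z i))| ≤ M * ((B + 2) * Eu) := by
    intro k
    by_cases hk : k = i
    · subst hk; rw [hdi]; simp; positivity
    · rw [hd k hk]
      have h1 : z i * (c k * (yi * z k - z i))
          = c k * (((yi - 1) * z i) * z k + (z i * z k - z i * z i)) := by ring
      rw [h1, abs_mul]
      have h2 : |((yi - 1) * z i) * z k + (z i * z k - z i * z i)| ≤ (B + 2) * Eu := by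
        calc |((yi - 1) * z i) * z k + (z i * z k - z i * z i)|
            ≤ |((yi - 1) * z i) * z k| + |z i * z k - z i * z i| := abs_add_le _ _
          _ ≤ |((yi - 1) * z i) * z k| + (|z i * z k| + |z i * z i|) :=
              add_le_add le_rfl (abs_sub _ _)
          _ ≤ Eu * B + (Eu + Eu) := by
              refine add_le_add ?_ (add_le_add (si_habs Eu _ _ (hsqz i) (hsqz k))
                (si_habs Eu _ _ (hsqz i) (hsqz i)))
              rw [abs_mul]
              exact mul_le_mul (si_habs Eu _ _ hsqy (hsqz i)) (hzB k) (abs_nonneg _) hE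
          _ = (B + 2) * Eu := by ring
      exact mul_le_mul (hc k) h2 (abs_nonneg _) hM
  have e1 : z i * ((n:ℝ)⁻¹ * ∑ k, c k * (d k - z i))
      = (n:ℝ)⁻¹ * ∑ k, z i * (c k * (d k - z i)) := by
    rw [mul_left_comm]
    congr 1
    exact Finset.mul_sum Finset.univ (fun k => c k * (d k - z i)) (z i)
  rw [e1, abs_mul, abs_of_nonneg (by positivity : (0:ℝ) ≤ (n:ℝ)⁻¹)]
  calc (n:ℝ)⁻¹ * |∑ k, z i * (c k * (d k - z i))|
      ≤ (n:ℝ)⁻¹ * ∑ k : Fin n, M * ((B + 2) * Eu) := by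
        refine mul_le_mul_of_nonneg_left ?_ (by positivity)
        exact (Finset.abs_sum_le_sum_abs _ _).trans (Finset.sum_le_sum fun k _ => hterm k)
    _ = (n:ℝ)⁻¹ * ((n:ℝ) * (M * ((B + 2) * Eu))) := by
        rw [Finset.sum_const, Finset.card_univ, Fintype.card_fin, nsmul_eq_mul]
    _ = M * (B + 2) * Eu := by field_simp

/-! ### Main theorem -/

/-- For the Cucker–Smale type model on the sphere with Lagrange
multiplier `λ_i = −‖v_i‖²/‖x_i‖² − (σ/N) Σ_k ⟨x_k − x_i, x_i⟩/⟨x_i,x_i⟩` and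
inter-particle bonding force, initial data on the unit sphere with tangent
velocities stay on the unit sphere with tangent velocities for all time. -/
theorem sphere_invariance (N : ℕ) (hN : 1 ≤ N) (σ : ℝ) (hσ : 0 < σ)
    (ψ : ℝ → ℝ) (hψc : ContinuousOn ψ (Set.Icc 0 2))
    (hψnn : ∀ s ∈ Set.Icc (0:ℝ) 2, 0 ≤ ψ s)
    (x v : Fin N → ℝ → Fin 3 → ℝ)
    (hx0 : ∀ i, ∀ t : ℝ, 0 ≤ t → x i t ≠ 0)
    (hxx : ∀ i k, i ≠ k → ∀ t : ℝ, 0 ≤ t → cross3 (x i t) (x k t) ≠ 0)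
    (hode1 : ∀ i, ∀ t : ℝ, 0 ≤ t → HasDerivAt (x i) (v i t) t)
    (hode2 : ∀ i, ∀ t : ℝ, 0 ≤ t → HasDerivAt (v i)
      ((-(enorm3 (v i t))^2 / (enorm3 (x i t))^2
          - σ / N * ∑ k, ((x k t - x i t) ⬝ᵥ (x i t)) / ((x i t) ⬝ᵥ (x i t))) • x i t
        + (N : ℝ)⁻¹ • ∑ k, ψ (enorm3 (x i t - x k t)) •
            (rotApply (x k t) (x i t) (v k t) - v i t)
        + (σ / N) • ∑ k, (x k t - x i t)) t)
    (hinit1 : ∀ i, (v i 0) ⬝ᵥ (x i 0) = 0)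
    (hinit2 : ∀ i, enorm3 (x i 0) = 1) :
    ∀ t : ℝ, 0 ≤ t → ∀ i, (v i t) ⬝ᵥ (x i t) = 0 ∧ enorm3 (x i t) = 1 := by
  haveI : Nonempty (Fin N) := ⟨⟨0, hN⟩⟩
  have hN0 : (N:ℝ) ≠ 0 := Nat.cast_ne_zero.mpr (by omega)
  -- derivative of y_i = ⟨x_i, x_i⟩
  have hy' : ∀ (i : Fin N) (t : ℝ), 0 ≤ t →
      HasDerivAt (fun s => x i s ⬝ᵥ x i s) (2 * (v i t ⬝ᵥ x i t)) t := by
    intro i t ht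
    have h := si_hasDerivAt_dot (hode1 i t ht) (hode1 i t ht)
    have e : v i t ⬝ᵥ x i t + x i t ⬝ᵥ v i t = 2 * (v i t ⬝ᵥ x i t) := by
      rw [dotProduct_comm (x i t) (v i t)]; ring
    rwa [e] at h
  -- algebraic identity for the derivative of z_i = ⟨v_i, x_i⟩
  have halg : ∀ (i : Fin N) (t : ℝ), 0 ≤ t →
      ((-(enorm3 (v i t))^2 / (enorm3 (x i t))^2
          - σ / N * ∑ k, ((x k t - x i t) ⬝ᵥ (x i t)) / ((x i t) ⬝ᵥ (x i t))) • x i t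
        + (N : ℝ)⁻¹ • ∑ k, ψ (enorm3 (x i t - x k t)) •
            (rotApply (x k t) (x i t) (v k t) - v i t)
        + (σ / N) • ∑ k, (x k t - x i t)) ⬝ᵥ x i t + v i t ⬝ᵥ v i t
      = (N:ℝ)⁻¹ * ∑ k, ψ (enorm3 (x i t - x k t)) *
          (rotApply (x k t) (x i t) (v k t) ⬝ᵥ x i t - v i t ⬝ᵥ x i t) := by
    intro i t ht
    have hx : x i t ⬝ᵥ x i t ≠ 0 := ne_of_gt (si_dot3_pos (hx0 i t ht))
    rw [add_dotProduct, add_dotProduct, smul_dotProduct, smul_dotProduct, smul_dotProduct,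
      si_sum_dot3, si_sum_dot3, si_enorm3_sq (v i t), si_enorm3_sq (x i t)]
    have e1 : ∀ k : Fin N, (ψ (enorm3 (x i t - x k t)) •
        (rotApply (x k t) (x i t) (v k t) - v i t)) ⬝ᵥ x i t
        = ψ (enorm3 (x i t - x k t)) *
          (rotApply (x k t) (x i t) (v k t) ⬝ᵥ x i t - v i t ⬝ᵥ x i t) := by
      intro k; rw [smul_dotProduct, sub_dotProduct]; simp
    rw [Finset.sum_congr rfl (fun k _ => e1 k)]
    have e2 : (-(v i t ⬝ᵥ v i t) / (x i t ⬝ᵥ x i t)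
          - σ / N * ∑ k, ((x k t - x i t) ⬝ᵥ x i t) / (x i t ⬝ᵥ x i t)) • (x i t ⬝ᵥ x i t)
        = -(v i t ⬝ᵥ v i t) - σ / N * ∑ k, ((x k t - x i t) ⬝ᵥ x i t) := by
      rw [← Finset.sum_div, smul_eq_mul, sub_mul, div_mul_cancel₀ _ hx, mul_assoc,
        div_mul_cancel₀ _ hx]
    rw [e2]
    simp only [smul_eq_mul]
    ring
  -- derivative of z_i
  have hz' : ∀ (i : Fin N) (t : ℝ), 0 ≤ t →
      HasDerivAt (fun s => v i s ⬝ᵥ x i s)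
        ((N:ℝ)⁻¹ * ∑ k, ψ (enorm3 (x i t - x k t)) *
          (rotApply (x k t) (x i t) (v k t) ⬝ᵥ x i t - v i t ⬝ᵥ x i t)) t := by
    intro i t ht
    have h := si_hasDerivAt_dot (hode2 i t ht) (hode1 i t ht)
    rwa [halg i t ht] at h
  -- continuity of the distance functions
  have hec : ∀ (i k : Fin N) (t : ℝ), 0 ≤ t →
      ContinuousAt (fun s => enorm3 (x i s - x k s)) t := by
    intro i k t ht
    have h2 : ContinuousAt (fun s => (x i s - x k s) ⬝ᵥ (x i s - x k s)) t :=
      (si_hasDerivAt_dot ((hode1 i t ht).sub (hode1 k t ht))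
        ((hode1 i t ht).sub (hode1 k t ht))).continuousAt
    exact Real.continuous_sqrt.continuousAt.comp h2
  -- the ψ bound
  obtain ⟨M0, hM0⟩ := isCompact_Icc.exists_bound_of_continuousOn hψc
  set M : ℝ := max M0 0 with hMdef
  have hMnn : 0 ≤ M := le_max_right _ _
  have hMψ : ∀ s ∈ Icc (0:ℝ) 2, |ψ s| ≤ M := by
    intro s hs
    exact le_trans (by simpa using hM0 s hs) (le_max_left _ _)
  -- the core extension step
  have core : ∀ t₀ : ℝ, 0 ≤ t₀ → (∀ i, v i t₀ ⬝ᵥ x i t₀ = 0 ∧ x i t₀ ⬝ᵥ x i t₀ = 1) →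
      ∃ b, t₀ < b ∧ ∀ u ∈ Icc t₀ b, ∀ i, v i u ⬝ᵥ x i u = 0 ∧ x i u ⬝ᵥ x i u = 1 := by
    intro t₀ ht₀0 hP
    -- step 1 : distances stay ≤ 2 on a right-neighborhood
    have hev : ∀ᶠ u in nhdsWithin t₀ (Ici t₀),
        ∀ i k : Fin N, enorm3 (x i u - x k u) ≤ 2 := by
      rw [Filter.eventually_all]; intro i
      rw [Filter.eventually_all]; intro k
      by_cases hik : i = k
      · subst hik
        filter_upwards with u
        simp [enorm3, sub_self, zero_dotProduct, Real.sqrt_zero]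
      · have hlt : enorm3 (x i t₀ - x k t₀) < 2 := by
          have hcr : 0 < cross3 (x i t₀) (x k t₀) ⬝ᵥ cross3 (x i t₀) (x k t₀) :=
            si_dot3_pos (hxx i k hik t₀ ht₀0)
          have hyi : x i t₀ ⬝ᵥ x i t₀ = 1 := (hP i).2
          have hyk : x k t₀ ⬝ᵥ x k t₀ = 1 := (hP k).2
          have hd2 : (x i t₀ ⬝ᵥ x k t₀)^2 < 1 := by
            have := si_lagrange3 (x i t₀) (x k t₀)
            nlinarith
          have e : (x i t₀ - x k t₀) ⬝ᵥ (x i t₀ - x k t₀)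
              = (x i t₀ ⬝ᵥ x i t₀) + (x k t₀ ⬝ᵥ x k t₀) - 2*(x i t₀ ⬝ᵥ x k t₀) := by
            rw [sub_dotProduct, dotProduct_sub, dotProduct_sub,
              dotProduct_comm (x k t₀) (x i t₀)]
            ring
          rw [enorm3]
          refine (Real.sqrt_lt' two_pos).mpr ?_
          rw [e, hyi, hyk]
          nlinarith [sq_nonneg (x i t₀ ⬝ᵥ x k t₀ + 1)]
        refine Filter.Eventually.filter_mono nhdsWithin_le_nhds ?_
        have := (hec i k t₀ ht₀0).tendsto.eventually_lt_const hlt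
        exact this.mono fun u h => le_of_lt h
    obtain ⟨b, hb, hsub⟩ := mem_nhdsGE_iff_exists_Icc_subset.mp hev
    have hdle : ∀ u ∈ Icc t₀ b, ∀ i k : Fin N, enorm3 (x i u - x k u) ∈ Icc (0:ℝ) 2 := by
      intro u hu i k
      exact ⟨Real.sqrt_nonneg _, hsub hu i k⟩
    -- step 2 : bound B on |y-1| and |z| on [t₀, b]
    have hcontg : ContinuousOn
        (fun u => (fun i => (x i u ⬝ᵥ x i u - 1, v i u ⬝ᵥ x i u)) : ℝ → Fin N → ℝ × ℝ)
        (Icc t₀ b) := by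
      rw [continuousOn_pi]
      intro i
      apply ContinuousOn.prodMk
      · intro u hu
        exact (((hy' i u (ht₀0.trans hu.1)).continuousAt).sub continuousAt_const).continuousWithinAt
      · intro u hu
        exact ((hz' i u (ht₀0.trans hu.1)).continuousAt).continuousWithinAt
    obtain ⟨B0, hB0⟩ := isCompact_Icc.exists_bound_of_continuousOn hcontg
    set B : ℝ := max B0 0 with hBdef
    have hBnn : 0 ≤ B := le_max_right _ _
    have hyB : ∀ u ∈ Icc t₀ b, ∀ i : Fin N,
        |x i u ⬝ᵥ x i u - 1| ≤ B ∧ |v i u ⬝ᵥ x i u| ≤ B := by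
      intro u hu i
      have h1 := hB0 u hu
      have h2 := (norm_le_pi_norm (fun i => (x i u ⬝ᵥ x i u - 1, v i u ⬝ᵥ x i u)) i).trans h1
      have hf := (norm_fst_le ((x i u ⬝ᵥ x i u - 1, v i u ⬝ᵥ x i u) : ℝ × ℝ)).trans h2
      have hs := (norm_snd_le ((x i u ⬝ᵥ x i u - 1, v i u ⬝ᵥ x i u) : ℝ × ℝ)).trans h2
      exact ⟨le_trans (by simpa using hf) (le_max_left _ _),
        le_trans (by simpa using hs) (le_max_left _ _)⟩
    -- step 3 : Gronwall
    set K : ℝ := N * (4 + 2 * (M * (B + 2))) with hKdef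
    set E : ℝ → ℝ := fun u => ∑ i, ((x i u ⬝ᵥ x i u - 1)^2 + (v i u ⬝ᵥ x i u)^2) with hEdef
    set E' : ℝ → ℝ := fun u => ∑ i,
      (2 * (x i u ⬝ᵥ x i u - 1) * (2 * (v i u ⬝ᵥ x i u))
        + 2 * (v i u ⬝ᵥ x i u) * ((N:ℝ)⁻¹ * ∑ k, ψ (enorm3 (x i u - x k u)) *
          (rotApply (x k u) (x i u) (v k u) ⬝ᵥ x i u - v i u ⬝ᵥ x i u))) with hE'def
    have hEnn : ∀ u, 0 ≤ E u := fun u =>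
      Finset.sum_nonneg fun i _ => add_nonneg (sq_nonneg _) (sq_nonneg _)
    have hEderiv : ∀ u : ℝ, 0 ≤ u → HasDerivAt E (E' u) u := by
      intro u hu
      apply HasDerivAt.fun_sum
      intro i _
      have h := (((hy' i u hu).sub_const 1).pow 2).add ((hz' i u hu).pow 2)
      convert h using 1
      · rfl
      · simp only [Nat.cast_ofNat, show (2:ℕ) - 1 = 1 from rfl, pow_one]
    have hEcont : ContinuousOn E (Icc t₀ b) := fun u hu =>
      (hEderiv u (ht₀0.trans hu.1)).continuousAt.continuousWithinAt
    have hE0 : E t₀ = 0 := by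
      apply Finset.sum_eq_zero
      intro i _
      rw [(hP i).1, (hP i).2]
      norm_num
    have hbound : ∀ u ∈ Ico t₀ b, ‖E' u‖ ≤ K * ‖E u‖ + 0 := by
      intro u hu
      have hu0 : 0 ≤ u := ht₀0.trans hu.1
      have huIcc : u ∈ Icc t₀ b := ⟨hu.1, hu.2.le⟩
      rw [add_zero, Real.norm_eq_abs, Real.norm_eq_abs, abs_of_nonneg (hEnn u)]
      have hsq : ∀ j : Fin N, (x j u ⬝ᵥ x j u - 1)^2 ≤ E u ∧ (v j u ⬝ᵥ x j u)^2 ≤ E u := by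
        intro j
        have h := Finset.single_le_sum
          (f := fun i => (x i u ⬝ᵥ x i u - 1)^2 + (v i u ⬝ᵥ x i u)^2)
          (fun i _ => add_nonneg (sq_nonneg _) (sq_nonneg _)) (Finset.mem_univ j)
        have h' : (x j u ⬝ᵥ x j u - 1)^2 + (v j u ⬝ᵥ x j u)^2 ≤ E u := by
          simp only [hEdef]; exact h
        constructor
        · nlinarith [h', sq_nonneg (v j u ⬝ᵥ x j u)]
        · nlinarith [h', sq_nonneg (x j u ⬝ᵥ x j u - 1)]
      have hterm : ∀ i : Fin N,
          |2 * (x i u ⬝ᵥ x i u - 1) * (2 * (v i u ⬝ᵥ x i u))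
            + 2 * (v i u ⬝ᵥ x i u) * ((N:ℝ)⁻¹ * ∑ k, ψ (enorm3 (x i u - x k u)) *
              (rotApply (x k u) (x i u) (v k u) ⬝ᵥ x i u - v i u ⬝ᵥ x i u))|
          ≤ (4 + 2 * (M * (B + 2))) * E u := by
        intro i
        have hW : |(v i u ⬝ᵥ x i u) * ((N:ℝ)⁻¹ * ∑ k, ψ (enorm3 (x i u - x k u)) *
            (rotApply (x k u) (x i u) (v k u) ⬝ᵥ x i u - v i u ⬝ᵥ x i u))|
            ≤ M * (B + 2) * E u := by
          refine si_Wbound N hN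
            (fun k => ψ (enorm3 (x i u - x k u)))
            (fun k => rotApply (x k u) (x i u) (v k u) ⬝ᵥ x i u)
            (fun k => v k u ⬝ᵥ x k u)
            (x i u ⬝ᵥ x i u) i M B (E u)
            hMnn hBnn (hEnn u) ?_ ?_ ?_ ?_ ?_ ?_
          · intro k
            exact hMψ _ (hdle u huIcc i k)
          · intro k
            exact (hyB u huIcc k).2
          · intro k
            exact (hsq k).2
          · exact (hsq i).1
          · intro k hk
            have hne : x k u ≠ x i u := by
              intro hEq
              apply hxx k i hk u hu0
              rw [hEq]
              exact si_cross3_self (x i u)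
            show rotApply (x k u) (x i u) (v k u) ⬝ᵥ x i u
              = (x i u ⬝ᵥ x i u) * (v k u ⬝ᵥ x k u)
            rw [si_rot_dot, if_neg hne]
          · show rotApply (x i u) (x i u) (v i u) ⬝ᵥ x i u = v i u ⬝ᵥ x i u
            rw [si_rot_dot, if_pos rfl]
        have hA : |2 * (x i u ⬝ᵥ x i u - 1) * (2 * (v i u ⬝ᵥ x i u))| ≤ 4 * E u := by
          have e : 2 * (x i u ⬝ᵥ x i u - 1) * (2 * (v i u ⬝ᵥ x i u))
              = 4 * ((x i u ⬝ᵥ x i u - 1) * (v i u ⬝ᵥ x i u)) := by ring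
          rw [e, abs_mul, abs_of_nonneg (by norm_num : (0:ℝ) ≤ 4)]
          have := si_habs (E u) _ _ (hsq i).1 (hsq i).2
          linarith
        calc |2 * (x i u ⬝ᵥ x i u - 1) * (2 * (v i u ⬝ᵥ x i u))
            + 2 * (v i u ⬝ᵥ x i u) * ((N:ℝ)⁻¹ * ∑ k, ψ (enorm3 (x i u - x k u)) *
              (rotApply (x k u) (x i u) (v k u) ⬝ᵥ x i u - v i u ⬝ᵥ x i u))|
            ≤ |2 * (x i u ⬝ᵥ x i u - 1) * (2 * (v i u ⬝ᵥ x i u))|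
              + |2 * (v i u ⬝ᵥ x i u) * ((N:ℝ)⁻¹ * ∑ k, ψ (enorm3 (x i u - x k u)) *
                (rotApply (x k u) (x i u) (v k u) ⬝ᵥ x i u - v i u ⬝ᵥ x i u))| := abs_add_le _ _
          _ ≤ 4 * E u + 2 * (M * (B + 2) * E u) := by
              refine add_le_add hA ?_
              have e : 2 * (v i u ⬝ᵥ x i u) * ((N:ℝ)⁻¹ * ∑ k, ψ (enorm3 (x i u - x k u)) *
                  (rotApply (x k u) (x i u) (v k u) ⬝ᵥ x i u - v i u ⬝ᵥ x i u))
                  = 2 * ((v i u ⬝ᵥ x i u) * ((N:ℝ)⁻¹ * ∑ k, ψ (enorm3 (x i u - x k u)) *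
                    (rotApply (x k u) (x i u) (v k u) ⬝ᵥ x i u - v i u ⬝ᵥ x i u))) := by ring
              rw [e, abs_mul, abs_of_nonneg (by norm_num : (0:ℝ) ≤ 2)]
              linarith
          _ = (4 + 2 * (M * (B + 2))) * E u := by ring
      calc |E' u| ≤ ∑ i : Fin N, (4 + 2 * (M * (B + 2))) * E u := by
            rw [hE'def]
            exact (Finset.abs_sum_le_sum_abs _ _).trans (Finset.sum_le_sum fun i _ => hterm i)
        _ = K * E u := by
            rw [Finset.sum_const, Finset.card_univ, Fintype.card_fin, nsmul_eq_mul, hKdef]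
            ring
    have hgr := norm_le_gronwallBound_of_norm_deriv_right_le hEcont
      (fun u hu => (hEderiv u (ht₀0.trans hu.1)).hasDerivWithinAt) (by
        rw [Real.norm_eq_abs, hE0, abs_zero]) hbound
    refine ⟨b, hb, ?_⟩
    intro u hu i
    have hEu : E u = 0 := by
      have h := hgr u hu
      rw [gronwallBound_ε0] at h
      simp only [zero_mul] at h
      have := abs_nonneg (E u)
      have h2 : |E u| = 0 := le_antisymm (by simpa using h) this
      exact abs_eq_zero.mp h2
    have hzero := (Finset.sum_eq_zero_iff_of_nonneg
      (fun i (_ : i ∈ Finset.univ) => add_nonneg (sq_nonneg (x i u ⬝ᵥ x i u - 1))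
        (sq_nonneg (v i u ⬝ᵥ x i u)))).mp hEu i (Finset.mem_univ i)
    constructor
    · nlinarith [sq_nonneg (x i u ⬝ᵥ x i u - 1), sq_nonneg (v i u ⬝ᵥ x i u)]
    · nlinarith [sq_nonneg (x i u ⬝ᵥ x i u - 1), sq_nonneg (v i u ⬝ᵥ x i u)]
  -- putting things together via a closed-set argument
  have main : ∀ T : ℝ, 0 ≤ T → ∀ t ∈ Icc (0:ℝ) T, ∀ i,
      v i t ⬝ᵥ x i t = 0 ∧ x i t ⬝ᵥ x i t = 1 := by
    intro T hT
    set S : Set ℝ := {t : ℝ | 0 ≤ t ∧ ∀ i, v i t ⬝ᵥ x i t = 0 ∧ x i t ⬝ᵥ x i t = 1} with hSdef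
    suffices h : Icc 0 T ⊆ S by
      intro t htm i
      exact (h htm).2 i
    apply IsClosed.Icc_subset_of_forall_exists_gt
    · -- closedness
      have hset : S ∩ Icc 0 T = ⋂ i : Fin N,
          ((Icc 0 T ∩ (fun t => v i t ⬝ᵥ x i t) ⁻¹' {0})
            ∩ (Icc 0 T ∩ (fun t => x i t ⬝ᵥ x i t) ⁻¹' {1})) := by
        ext t
        simp only [hSdef, Set.mem_inter_iff, Set.mem_iInter, Set.mem_preimage,
          Set.mem_singleton_iff, Set.mem_setOf_eq, Set.mem_Icc]
        constructor
        · rintro ⟨⟨h0, hPt⟩, h1, h2⟩ i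
          exact ⟨⟨⟨h0, h2⟩, (hPt i).1⟩, ⟨⟨h0, h2⟩, (hPt i).2⟩⟩
        · intro h
          have i0 := Classical.arbitrary (Fin N)
          have h0 := (h i0).1.1
          exact ⟨⟨h0.1, fun i => ⟨(h i).1.2, (h i).2.2⟩⟩, h0⟩
      rw [hset]
      refine isClosed_iInter fun i => IsClosed.inter ?_ ?_
      · refine ContinuousOn.preimage_isClosed_of_isClosed ?_ isClosed_Icc isClosed_singleton
        intro u hu
        exact ((hz' i u hu.1).continuousAt).continuousWithinAt
      · refine ContinuousOn.preimage_isClosed_of_isClosed ?_ isClosed_Icc isClosed_singleton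
        intro u hu
        exact ((hy' i u hu.1).continuousAt).continuousWithinAt
    · exact ⟨le_refl 0, fun i => ⟨hinit1 i, si_enorm3_eq_one_iff.mp (hinit2 i)⟩⟩
    · rintro t₀ ⟨⟨ht₀0, hP⟩, ht₀Ico⟩ w hw
      obtain ⟨b, hb, hcore⟩ := core t₀ ht₀0 hP
      refine ⟨min b (min T w), ⟨?_, ?_⟩, ?_, ?_⟩
      · exact ht₀0.trans (le_min hb.le (le_min ht₀Ico.2.le (le_of_lt hw)))
      · exact hcore _ ⟨le_min hb.le (le_min ht₀Ico.2.le (le_of_lt hw)), min_le_left _ _⟩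
      · exact lt_min hb (lt_min ht₀Ico.2 hw)
      · exact (min_le_right _ _).trans (min_le_right _ _)
  intro t ht i
  have h := main t ht t ⟨ht, le_refl t⟩ i
  exact ⟨h.1, si_enorm3_eq_one_iff.mpr h.2⟩
end
end

section
/- Let N ≥ 1, σ > 0, and let ψ : [0,2] → ℝ be a nonnegative strictly decreasing C¹ function with ψ(2) = 0. Suppose x_i, v_i : [0,∞) → ℝ³ (1 ≤ i ≤ N) form a solution of the Cucker–Smale type flocking model on the unit sphere with inter-particle bonding force, i.e., ‖x_i(t)‖ = 1, ⟨x_i(t), v_i(t)⟩ = 0, x_i(t) ≠ −x_k(t) for all i, k and t ≥ 0, and ẋ_i = v_i, v̇_i = −‖v_i‖² x_i + (1/N) Σ_{k=1}^N ψ_{ik} (R_{x_k→x_i}(v_k) − v_i) + (σ/N) Σ_{k=1}^N (x_k − ⟨x_i,x_k⟩ x_i), where ψ_{ik} := ψ(‖x_i − x_k‖). Then the energy E(t) is differentiable and satisfies dE/dt = − Σ_{i,j=1}^N (ψ_{ij}/N²) ‖R_{x_j→x_i}(v_j) − v_i‖² for all t ≥ 0; consequently, E(t) + Σ_{i,j=1}^N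 ∫_0^t (ψ_{ij}(s)/N²) ‖R_{x_j(s)→x_i(s)}(v_j(s)) − v_i(s)‖² ds ≤ E(0) for all t ≥ 0. -/
open Matrix Set
open scoped BigOperators

noncomputable section

namespace ED

lemma dot_self_nonneg3 (a : Fin 3 → ℝ) : 0 ≤ a ⬝ᵥ a :=
  Finset.sum_nonneg fun i _ => mul_self_nonneg (a i)

lemma enorm3_sq (a : Fin 3 → ℝ) : (enorm3 a)^2 = a ⬝ᵥ a :=
  Real.sq_sqrt (dot_self_nonneg3 a)

lemma eq_of_dot_self_eq_zero {a : Fin 3 → ℝ} (h : a ⬝ᵥ a = 0) : a = 0 := by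
  funext i
  have h0 : ∀ j, 0 ≤ a j * a j := fun j => mul_self_nonneg (a j)
  have := (Finset.sum_eq_zero_iff_of_nonneg (fun j _ => h0 j)).mp h i (Finset.mem_univ i)
  exact mul_self_eq_zero.mp this

lemma lagrange (a b : Fin 3 → ℝ) :
    (cross3 a b) ⬝ᵥ (cross3 a b) = (a ⬝ᵥ a) * (b ⬝ᵥ b) - (a ⬝ᵥ b)^2 := by
  simp [cross3, dotProduct, Fin.sum_univ_three]; ring

lemma cross_dot_left (a b : Fin 3 → ℝ) : a ⬝ᵥ cross3 a b = 0 := by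
  simp [cross3, dotProduct, Fin.sum_univ_three]; ring

lemma cross_dot_right (a b : Fin 3 → ℝ) : b ⬝ᵥ cross3 a b = 0 := by
  simp [cross3, dotProduct, Fin.sum_univ_three]; ring

lemma gram (a b w : Fin 3 → ℝ) :
    ((cross3 a b) ⬝ᵥ w)^2 =
      (a ⬝ᵥ a) * ((b ⬝ᵥ b) * (w ⬝ᵥ w) - (b ⬝ᵥ w)^2)
      - (a ⬝ᵥ b) * ((a ⬝ᵥ b) * (w ⬝ᵥ w) - (a ⬝ᵥ w) * (b ⬝ᵥ w))
      + (a ⬝ᵥ w) * ((a ⬝ᵥ b) * (b ⬝ᵥ w) - (b ⬝ᵥ b) * (a ⬝ᵥ w)) := by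
  simp [cross3, dotProduct, Fin.sum_univ_three]; ring

lemma vecMulVec_mulVec' (a b w : Fin 3 → ℝ) :
    (vecMulVec a b).mulVec w = (b ⬝ᵥ w) • a := by
  funext i
  simp [mulVec, vecMulVec, dotProduct, Fin.sum_univ_three]; ring

lemma rotApply_eq (z₁ z₂ v : Fin 3 → ℝ) (h1 : z₁ ⬝ᵥ z₁ = 1) (h2 : z₂ ⬝ᵥ z₂ = 1)
    (hne : z₁ ≠ -z₂) (hne' : z₁ ≠ z₂) :
    rotApply z₁ z₂ v = (z₁ ⬝ᵥ z₂) • v + (z₁ ⬝ᵥ v) • z₂ - (z₂ ⬝ᵥ v) • z₁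
      + (((cross3 z₁ z₂) ⬝ᵥ v) / (1 + z₁ ⬝ᵥ z₂)) • cross3 z₁ z₂ := by
  set c := z₁ ⬝ᵥ z₂ with hc
  have hzz : z₂ ⬝ᵥ z₁ = c := dotProduct_comm z₂ z₁
  have hc1 : c ≠ 1 := fun h => hne' (sub_eq_zero.mp (eq_of_dot_self_eq_zero (by
    simp only [dotProduct_sub, sub_dotProduct, h1, h2, ← hc, hzz, h]; ring)))
  have hcm1 : c ≠ -1 := fun h => hne (eq_neg_of_add_eq_zero_left (eq_of_dot_self_eq_zero (by
    simp only [dotProduct_add, add_dotProduct, h1, h2, ← hc, hzz, h]; ring)))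
  have hcr : (cross3 z₁ z₂) ⬝ᵥ (cross3 z₁ z₂) = 1 - c^2 := by
    rw [lagrange, h1, h2, ← hc]; ring
  have hn : enorm3 (cross3 z₁ z₂) ^ 2 = 1 - c^2 := by rw [enorm3_sq, hcr]
  have hnpos : (0:ℝ) < 1 - c^2 := by
    have h0 := dot_self_nonneg3 (cross3 z₁ z₂)
    rw [hcr] at h0
    rcases lt_or_eq_of_le h0 with h | h
    · exact h
    · exfalso
      have h2' : (c-1)*(c+1) = 0 := by nlinarith
      rcases mul_eq_zero.mp h2' with h' | h'
      · exact hc1 (by linarith)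
      · exact hcm1 (by linarith)
  have hnn : enorm3 (cross3 z₁ z₂) ≠ 0 := by
    intro h; rw [h] at hn; simp at hn; nlinarith
  rw [rotApply, if_neg hne', rotMatrix, add_mulVec, sub_mulVec, add_mulVec,
    smul_mulVec, one_mulVec, vecMulVec_mulVec', vecMulVec_mulVec',
    smul_mulVec, vecMulVec_mulVec']
  rw [uvec3]
  congr 1
  rw [smul_dotProduct]
  rw [smul_smul, smul_smul]
  congr 1
  have hnval : enorm3 (cross3 z₁ z₂) * enorm3 (cross3 z₁ z₂) = 1 - c^2 := by
    rw [← hn]; ring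
  have h1c : (1:ℝ) + c ≠ 0 := fun h => hcm1 (by linarith)
  have h1c' : (1:ℝ) - c ≠ 0 := fun h => hc1 (by linarith)
  set n := enorm3 (cross3 z₁ z₂) with hndef
  set d := cross3 z₁ z₂ ⬝ᵥ v with hddef
  rw [smul_eq_mul]
  have hinv : n⁻¹ * n⁻¹ = ((1-c)*(1+c))⁻¹ := by
    rw [← mul_inv, hnval]; ring_nf
  calc (1 - z₁ ⬝ᵥ z₂) * (n⁻¹ * d) * n⁻¹ = (1-c) * d * (n⁻¹ * n⁻¹) := by rw [← hc]; ring
    _ = (1-c) * d * ((1-c)*(1+c))⁻¹ := by rw [hinv]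
    _ = d / (1+c) := by field_simp


lemma cross3_self (a : Fin 3 → ℝ) : cross3 a a = 0 := by
  funext i; fin_cases i <;> simp [cross3] <;> ring

lemma dot_rotApply (z₁ z₂ v w : Fin 3 → ℝ) (h1 : z₁ ⬝ᵥ z₁ = 1) (h2 : z₂ ⬝ᵥ z₂ = 1)
    (hne : z₁ ≠ -z₂) (htv : z₁ ⬝ᵥ v = 0) (htw : z₂ ⬝ᵥ w = 0) :
    w ⬝ᵥ rotApply z₁ z₂ v =
      (z₁ ⬝ᵥ z₂) * (w ⬝ᵥ v) - (z₂ ⬝ᵥ v) * (w ⬝ᵥ z₁)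
      + ((cross3 z₁ z₂ ⬝ᵥ v) * (w ⬝ᵥ cross3 z₁ z₂)) / (1 + z₁ ⬝ᵥ z₂) := by
  by_cases h : z₁ = z₂
  · subst h
    rw [rotApply, if_pos rfl, cross3_self]
    have hz : (0 : Fin 3 → ℝ) ⬝ᵥ v = 0 := zero_dotProduct v
    rw [hz, h1, dotProduct_comm w z₁, htw]
    ring
  · rw [rotApply_eq _ _ _ h1 h2 hne h]
    simp only [dotProduct_add, dotProduct_sub, dotProduct_smul, smul_eq_mul]
    rw [dotProduct_comm w z₂, htw, htv]
    ring

lemma rotApply_dot_self (z₁ z₂ v : Fin 3 → ℝ) (h1 : z₁ ⬝ᵥ z₁ = 1) (h2 : z₂ ⬝ᵥ z₂ = 1)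
    (hne : z₁ ≠ -z₂) (htv : z₁ ⬝ᵥ v = 0) :
    rotApply z₁ z₂ v ⬝ᵥ rotApply z₁ z₂ v = v ⬝ᵥ v := by
  by_cases h : z₁ = z₂
  · rw [rotApply, if_pos h]
  · rw [rotApply_eq _ _ _ h1 h2 hne h]
    set c := z₁ ⬝ᵥ z₂ with hc
    have h1c : (1:ℝ) + c ≠ 0 := by
      intro hh
      apply hne
      exact eq_neg_of_add_eq_zero_left (eq_of_dot_self_eq_zero (by
        simp only [dotProduct_add, add_dotProduct, h1, h2, dotProduct_comm z₂ z₁, ← hc]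
        linarith))
    have hcr : (cross3 z₁ z₂) ⬝ᵥ (cross3 z₁ z₂) = 1 - c^2 := by
      rw [lagrange, h1, h2, ← hc]; ring
    have hgram : ((cross3 z₁ z₂) ⬝ᵥ v)^2 = (1 - c^2) * (v ⬝ᵥ v) - (z₂ ⬝ᵥ v)^2 := by
      rw [gram, h1, h2, ← hc, htv]; ring
    simp only [dotProduct_add, add_dotProduct, dotProduct_sub, sub_dotProduct,
      dotProduct_smul, smul_dotProduct, smul_eq_mul]
    rw [dotProduct_comm v z₁, dotProduct_comm (cross3 z₁ z₂) z₁,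
      dotProduct_comm (cross3 z₁ z₂) z₂, dotProduct_comm v z₂,
      dotProduct_comm (cross3 z₁ z₂) v, dotProduct_comm z₂ z₁]
    rw [htv, h1, h2, hcr, cross_dot_left, cross_dot_right, ← hc]
    rw [dotProduct_comm (cross3 z₁ z₂) v] at hgram
    set A := v ⬝ᵥ v with hA
    set B := z₂ ⬝ᵥ v with hB
    set D := v ⬝ᵥ cross3 z₁ z₂ with hD
    field_simp
    linear_combination (1 + c)^2 * hgram

lemma dotProduct_sum' {ι : Type*} (s : Finset ι) (a : Fin 3 → ℝ) (f : ι → Fin 3 → ℝ) :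
    a ⬝ᵥ (∑ i ∈ s, f i) = ∑ i ∈ s, a ⬝ᵥ f i := by
  simp only [dotProduct, Finset.sum_apply, Finset.mul_sum]
  exact Finset.sum_comm

lemma hasDerivAt_dotp {f g : ℝ → Fin 3 → ℝ} {f' g' : Fin 3 → ℝ} {t : ℝ}
    (hf : HasDerivAt f f' t) (hg : HasDerivAt g g' t) :
    HasDerivAt (fun s => f s ⬝ᵥ g s) (f' ⬝ᵥ g t + f t ⬝ᵥ g') t := by
  have hf' := hasDerivAt_pi.mp hf
  have hg' := hasDerivAt_pi.mp hg
  have := HasDerivAt.fun_sum (u := Finset.univ)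
    (A := fun m s => f s m * g s m)
    (A' := fun m => f' m * g t m + f t m * g' m)
    (fun m _ => (hf' m).mul (hg' m))
  simpa [dotProduct, Finset.sum_add_distrib] using this

lemma enorm3_sub_comm (a b : Fin 3 → ℝ) : enorm3 (a - b) = enorm3 (b - a) := by
  unfold enorm3
  congr 1
  have : a - b = -(b - a) := by ring
  rw [this, neg_dotProduct, dotProduct_neg, neg_neg]

lemma main_sum_lemma (N : ℕ) (hN : (N:ℝ) ≠ 0) (σ : ℝ) (P r b : Fin N → Fin N → ℝ)
    (a : Fin N → ℝ) (hP : ∀ i j, P i j = P j i) :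
    (N:ℝ)⁻¹ * (∑ k, 2 * ((N:ℝ)⁻¹ * (∑ j, P k j * (r k j - a k)) + (σ/N) * ∑ j, b k j))
      + σ/(2*N^2) * (-4 * ∑ k, ∑ l, b k l)
    = - ∑ i, ∑ j, P i j / N^2 * (a j - 2 * r i j + a i) := by
  have hswap : ∑ i, ∑ j, P i j * a j = ∑ i, ∑ j, P i j * a i := by
    rw [Finset.sum_comm]
    exact Finset.sum_congr rfl fun i _ => Finset.sum_congr rfl fun j _ => by rw [hP]
  have F1 : ∑ k, 2 * ((N:ℝ)⁻¹ * (∑ j, P k j * (r k j - a k)) + (σ/N) * ∑ j, b k j)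
      = 2*(N:ℝ)⁻¹ * (∑ k, ∑ j, P k j * r k j) - 2*(N:ℝ)⁻¹ * (∑ k, ∑ j, P k j * a k)
        + 2*(σ/N) * (∑ k, ∑ j, b k j) := by
    calc ∑ k, 2 * ((N:ℝ)⁻¹ * (∑ j, P k j * (r k j - a k)) + (σ/N) * ∑ j, b k j)
        = ∑ k, (2*(N:ℝ)⁻¹ * (∑ j, P k j * r k j) - 2*(N:ℝ)⁻¹ * (∑ j, P k j * a k)
            + 2*(σ/N) * (∑ j, b k j)) := by
          refine Finset.sum_congr rfl fun k _ => ?_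
          have : ∑ j, P k j * (r k j - a k) = ∑ j, P k j * r k j - ∑ j, P k j * a k := by
            rw [← Finset.sum_sub_distrib]
            exact Finset.sum_congr rfl fun j _ => by ring
          rw [this]; ring
      _ = _ := by
          rw [Finset.sum_add_distrib, Finset.sum_sub_distrib, ← Finset.mul_sum,
            ← Finset.mul_sum, ← Finset.mul_sum]
  have F2 : ∑ i, ∑ j, P i j / N^2 * (a j - 2 * r i j + a i)
      = (1/(N:ℝ)^2) * (∑ i, ∑ j, P i j * a j) - (2/(N:ℝ)^2) * (∑ i, ∑ j, P i j * r i j)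
        + (1/(N:ℝ)^2) * (∑ i, ∑ j, P i j * a i) := by
    calc ∑ i, ∑ j, P i j / N^2 * (a j - 2 * r i j + a i)
        = ∑ i, ((1/(N:ℝ)^2) * (∑ j, P i j * a j) - (2/(N:ℝ)^2) * (∑ j, P i j * r i j)
            + (1/(N:ℝ)^2) * (∑ j, P i j * a i)) := by
          refine Finset.sum_congr rfl fun i _ => ?_
          rw [Finset.mul_sum, Finset.mul_sum, Finset.mul_sum,
            ← Finset.sum_sub_distrib, ← Finset.sum_add_distrib]
          exact Finset.sum_congr rfl fun j _ => by ring
      _ = _ := by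
          rw [Finset.sum_add_distrib, Finset.sum_sub_distrib, ← Finset.mul_sum,
            ← Finset.mul_sum, ← Finset.mul_sum]
  rw [F1, F2, hswap]
  field_simp
  ring

lemma contOn_dot {s : Set ℝ} {f g : ℝ → Fin 3 → ℝ} (hf : ContinuousOn f s)
    (hg : ContinuousOn g s) : ContinuousOn (fun u => f u ⬝ᵥ g u) s := by
  have hfi : ∀ i, ContinuousOn (fun u => f u i) s :=
    fun i => (continuous_apply i).comp_continuousOn hf
  have hgi : ∀ i, ContinuousOn (fun u => g u i) s :=
    fun i => (continuous_apply i).comp_continuousOn hg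
  simp only [dotProduct]
  exact continuousOn_finset_sum _ fun i _ => (hfi i).mul (hgi i)

lemma contOn_cross {s : Set ℝ} {f g : ℝ → Fin 3 → ℝ} (hf : ContinuousOn f s)
    (hg : ContinuousOn g s) : ContinuousOn (fun u => cross3 (f u) (g u)) s := by
  have hfi : ∀ i, ContinuousOn (fun u => f u i) s :=
    fun i => (continuous_apply i).comp_continuousOn hf
  have hgi : ∀ i, ContinuousOn (fun u => g u i) s :=
    fun i => (continuous_apply i).comp_continuousOn hg
  rw [continuousOn_pi]
  intro i
  fin_cases i
  · simpa [cross3] using ((hfi 1).fun_mul (hgi 2)).fun_sub ((hfi 2).fun_mul (hgi 1))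
  · simpa [cross3] using ((hfi 2).fun_mul (hgi 0)).fun_sub ((hfi 0).fun_mul (hgi 2))
  · simpa [cross3] using ((hfi 0).fun_mul (hgi 1)).fun_sub ((hfi 1).fun_mul (hgi 0))

end ED



/-- Energy dissipation for the Cucker–Smale type flocking model on the
unit sphere with inter-particle bonding force: the energy
`E(t) = (1/N) Σ_k ‖v_k‖² + (σ/(2N²)) Σ_{k,l} ‖x_k − x_l‖²` satisfies
`dE/dt = −Σ_{i,j} (ψ_{ij}/N²)‖R_{x_j→x_i}(v_j) − v_i‖²`, and consequently
`E(t) + Σ_{i,j} ∫_0^t (ψ_{ij}(s)/N²)‖R(v_j) − v_i‖² ds ≤ E(0)`. -/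
theorem energy_dissipation (N : ℕ) (hN : 1 ≤ N) (σ : ℝ) (hσ : 0 < σ)
    (ψ : ℝ → ℝ) (hψreg : ContDiffOn ℝ 1 ψ (Set.Icc 0 2))
    (hψnn : ∀ s ∈ Set.Icc (0:ℝ) 2, 0 ≤ ψ s)
    (hψanti : StrictAntiOn ψ (Set.Icc 0 2)) (hψ2 : ψ 2 = 0)
    (x v : Fin N → ℝ → Fin 3 → ℝ)
    (hsph : ∀ i, ∀ t : ℝ, 0 ≤ t → enorm3 (x i t) = 1)
    (htan : ∀ i, ∀ t : ℝ, 0 ≤ t → (x i t) ⬝ᵥ (v i t) = 0)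
    (hanti : ∀ i k, ∀ t : ℝ, 0 ≤ t → x i t ≠ -(x k t))
    (hode1 : ∀ i, ∀ t : ℝ, 0 ≤ t → HasDerivAt (x i) (v i t) t)
    (hode2 : ∀ i, ∀ t : ℝ, 0 ≤ t → HasDerivAt (v i)
      ((-(enorm3 (v i t))^2) • x i t
        + (N : ℝ)⁻¹ • ∑ k, ψ (enorm3 (x i t - x k t)) •
            (rotApply (x k t) (x i t) (v k t) - v i t)
        + (σ / N) • ∑ k, (x k t - ((x i t) ⬝ᵥ (x k t)) • x i t)) t)
    (E : ℝ → ℝ)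
    (hE : ∀ t, E t = (N : ℝ)⁻¹ * ∑ k, (enorm3 (v k t))^2
      + σ / (2 * N^2) * ∑ k, ∑ l, (enorm3 (x k t - x l t))^2) :
    (∀ t : ℝ, 0 ≤ t → HasDerivAt E
      (- ∑ i, ∑ j, ψ (enorm3 (x i t - x j t)) / N^2 *
        (enorm3 (rotApply (x j t) (x i t) (v j t) - v i t))^2) t) ∧
    (∀ t : ℝ, 0 ≤ t →
      E t + ∑ i, ∑ j, (∫ s in (0:ℝ)..t, ψ (enorm3 (x i s - x j s)) / N^2 *
        (enorm3 (rotApply (x j s) (x i s) (v j s) - v i s))^2) ≤ E 0) := by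
  have hNR : (N:ℝ) ≠ 0 := Nat.cast_ne_zero.mpr (by omega)
  have hXX : ∀ i, ∀ t : ℝ, 0 ≤ t → x i t ⬝ᵥ x i t = 1 := by
    intro i t ht
    have h2 := ED.enorm3_sq (x i t)
    rw [hsph i t ht] at h2
    simpa using h2.symm
  have hderiv : ∀ t : ℝ, 0 ≤ t → HasDerivAt E
      (- ∑ i, ∑ j, ψ (enorm3 (x i t - x j t)) / N^2 *
        (enorm3 (rotApply (x j t) (x i t) (v j t) - v i t))^2) t := by
    intro t ht
    have hE2 : E = fun s => (N : ℝ)⁻¹ * ∑ k, (v k s ⬝ᵥ v k s)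
        + σ / (2 * N^2) * ∑ k, ∑ l, ((x k s - x l s) ⬝ᵥ (x k s - x l s)) := by
      funext s
      rw [hE s]
      simp only [ED.enorm3_sq]
    have hD0 : HasDerivAt E ((N : ℝ)⁻¹ * ∑ k, 2 * (v k t ⬝ᵥ
          ((-(enorm3 (v k t))^2) • x k t
            + (N : ℝ)⁻¹ • ∑ j, ψ (enorm3 (x k t - x j t)) •
                (rotApply (x j t) (x k t) (v j t) - v k t)
            + (σ / N) • ∑ j, (x j t - ((x k t) ⬝ᵥ (x j t)) • x k t)))
        + σ / (2 * N^2) * ∑ k, ∑ l,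
          ((v k t - v l t) ⬝ᵥ (x k t - x l t) + (x k t - x l t) ⬝ᵥ (v k t - v l t))) t := by
      rw [hE2]
      apply HasDerivAt.add
      · have hsum : HasDerivAt (fun s => ∑ k, (v k s ⬝ᵥ v k s))
            (∑ k, 2 * (v k t ⬝ᵥ
              ((-(enorm3 (v k t))^2) • x k t
                + (N : ℝ)⁻¹ • ∑ j, ψ (enorm3 (x k t - x j t)) •
                    (rotApply (x j t) (x k t) (v j t) - v k t)
                + (σ / N) • ∑ j, (x j t - ((x k t) ⬝ᵥ (x j t)) • x k t)))) t := by
          apply HasDerivAt.fun_sum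
          intro k _
          have h := ED.hasDerivAt_dotp (hode2 k t ht) (hode2 k t ht)
          convert h using 1
          case e'_4 => rfl
          case e'_5 => rfl
          rw [dotProduct_comm]
          ring
        exact hsum.const_mul _
      · have hsum : HasDerivAt (fun s => ∑ k, ∑ l, ((x k s - x l s) ⬝ᵥ (x k s - x l s)))
            (∑ k, ∑ l, ((v k t - v l t) ⬝ᵥ (x k t - x l t)
              + (x k t - x l t) ⬝ᵥ (v k t - v l t))) t := by
          apply HasDerivAt.fun_sum
          intro k _
          apply HasDerivAt.fun_sum
          intro l _
          exact ED.hasDerivAt_dotp ((hode1 k t ht).sub (hode1 l t ht))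
            ((hode1 k t ht).sub (hode1 l t ht))
        exact hsum.const_mul _
    -- expand the dot product with the acceleration
    have hVA : ∀ k, v k t ⬝ᵥ
          ((-(enorm3 (v k t))^2) • x k t
            + (N : ℝ)⁻¹ • ∑ j, ψ (enorm3 (x k t - x j t)) •
                (rotApply (x j t) (x k t) (v j t) - v k t)
            + (σ / N) • ∑ j, (x j t - ((x k t) ⬝ᵥ (x j t)) • x k t))
        = (N : ℝ)⁻¹ * (∑ j, ψ (enorm3 (x k t - x j t)) *
              ((v k t ⬝ᵥ rotApply (x j t) (x k t) (v j t)) - (v k t ⬝ᵥ v k t)))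
          + (σ / N) * ∑ j, (v k t ⬝ᵥ x j t) := by
      intro k
      have hvx : v k t ⬝ᵥ x k t = 0 := by
        rw [dotProduct_comm]; exact htan k t ht
      rw [dotProduct_add, dotProduct_add, dotProduct_smul, dotProduct_smul, dotProduct_smul,
        ED.dotProduct_sum', ED.dotProduct_sum', hvx]
      have e1 : ∑ j, v k t ⬝ᵥ (ψ (enorm3 (x k t - x j t)) •
            (rotApply (x j t) (x k t) (v j t) - v k t))
          = ∑ j, ψ (enorm3 (x k t - x j t)) *
              ((v k t ⬝ᵥ rotApply (x j t) (x k t) (v j t)) - (v k t ⬝ᵥ v k t)) := by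
        refine Finset.sum_congr rfl fun j _ => ?_
        rw [dotProduct_smul, dotProduct_sub, smul_eq_mul]
      have e2 : ∑ j, v k t ⬝ᵥ (x j t - ((x k t) ⬝ᵥ (x j t)) • x k t)
          = ∑ j, (v k t ⬝ᵥ x j t) := by
        refine Finset.sum_congr rfl fun j _ => ?_
        rw [dotProduct_sub, dotProduct_smul, hvx, smul_zero]
        ring
      rw [e1, e2]
      simp only [smul_eq_mul]
      ring
    have hpos : ∑ k, ∑ l, ((v k t - v l t) ⬝ᵥ (x k t - x l t)
          + (x k t - x l t) ⬝ᵥ (v k t - v l t))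
        = -4 * ∑ k, ∑ l, (v k t ⬝ᵥ x l t) := by
      have step1 : ∑ k, ∑ l, ((v k t - v l t) ⬝ᵥ (x k t - x l t)
            + (x k t - x l t) ⬝ᵥ (v k t - v l t))
          = ∑ k, ∑ l, (-2 * (v k t ⬝ᵥ x l t) + -2 * (v l t ⬝ᵥ x k t)) := by
        refine Finset.sum_congr rfl fun k _ => Finset.sum_congr rfl fun l _ => ?_
        rw [dotProduct_comm (x k t - x l t) (v k t - v l t)]
        rw [sub_dotProduct, dotProduct_sub, dotProduct_sub]
        have h1 : v k t ⬝ᵥ x k t = 0 := by rw [dotProduct_comm]; exact htan k t ht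
        have h2 : v l t ⬝ᵥ x l t = 0 := by rw [dotProduct_comm]; exact htan l t ht
        rw [h1, h2]
        ring
      rw [step1]
      simp only [Finset.sum_add_distrib]
      rw [Finset.sum_comm (f := fun k l => -2 * (v l t ⬝ᵥ x k t))]
      simp only [← Finset.mul_sum]
      ring
    have hnorm : ∀ i j, (enorm3 (rotApply (x j t) (x i t) (v j t) - v i t))^2
        = (v j t ⬝ᵥ v j t) - 2 * (v i t ⬝ᵥ rotApply (x j t) (x i t) (v j t))
          + (v i t ⬝ᵥ v i t) := by
      intro i j
      rw [ED.enorm3_sq, dotProduct_sub, sub_dotProduct, sub_dotProduct,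
        ED.rotApply_dot_self _ _ _ (hXX j t ht) (hXX i t ht) (hanti j i t ht) (htan j t ht),
        dotProduct_comm (rotApply (x j t) (x i t) (v j t)) (v i t)]
      ring
    have hPsym : ∀ i j : Fin N, ψ (enorm3 (x i t - x j t)) = ψ (enorm3 (x j t - x i t)) := by
      intro i j
      rw [ED.enorm3_sub_comm]
    have key := ED.main_sum_lemma N hNR σ
      (fun i j => ψ (enorm3 (x i t - x j t)))
      (fun i j => v i t ⬝ᵥ rotApply (x j t) (x i t) (v j t))
      (fun k l => v k t ⬝ᵥ x l t)
      (fun i => v i t ⬝ᵥ v i t)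
      hPsym
    convert hD0 using 1
    have congr1 : ∑ k, 2 * (v k t ⬝ᵥ
          ((-(enorm3 (v k t))^2) • x k t
            + (N : ℝ)⁻¹ • ∑ j, ψ (enorm3 (x k t - x j t)) •
                (rotApply (x j t) (x k t) (v j t) - v k t)
            + (σ / N) • ∑ j, (x j t - ((x k t) ⬝ᵥ (x j t)) • x k t)))
        = ∑ k, 2 * ((N : ℝ)⁻¹ * (∑ j, ψ (enorm3 (x k t - x j t)) *
              ((v k t ⬝ᵥ rotApply (x j t) (x k t) (v j t)) - (v k t ⬝ᵥ v k t)))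
          + (σ / N) * ∑ j, (v k t ⬝ᵥ x j t)) := by
      refine Finset.sum_congr rfl fun k _ => ?_
      rw [hVA k]
    rw [congr1, hpos, key]
    congr 1
    refine Finset.sum_congr rfl fun i _ => Finset.sum_congr rfl fun j _ => ?_
    rw [hnorm i j]
  refine ⟨hderiv, ?_⟩
  intro t ht
  have hnormS : ∀ (i j : Fin N) (s : ℝ), 0 ≤ s →
      (enorm3 (rotApply (x j s) (x i s) (v j s) - v i s))^2
      = (v j s ⬝ᵥ v j s) + (v i s ⬝ᵥ v i s)
        - 2 * (v i s ⬝ᵥ rotApply (x j s) (x i s) (v j s)) := by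
    intro i j s hs
    rw [ED.enorm3_sq, dotProduct_sub, sub_dotProduct, sub_dotProduct,
      ED.rotApply_dot_self _ _ _ (hXX j s hs) (hXX i s hs) (hanti j i s hs) (htan j s hs),
      dotProduct_comm (rotApply (x j s) (x i s) (v j s)) (v i s)]
    ring
  have hdotR : ∀ (i j : Fin N) (s : ℝ), 0 ≤ s →
      v i s ⬝ᵥ rotApply (x j s) (x i s) (v j s)
      = (x j s ⬝ᵥ x i s) * (v i s ⬝ᵥ v j s) - (x i s ⬝ᵥ v j s) * (v i s ⬝ᵥ x j s)
        + ((cross3 (x j s) (x i s) ⬝ᵥ v j s) * (v i s ⬝ᵥ cross3 (x j s) (x i s)))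
            / (1 + x j s ⬝ᵥ x i s) :=
    fun i j s hs => ED.dot_rotApply _ _ _ _ (hXX j s hs) (hXX i s hs) (hanti j i s hs)
      (htan j s hs) (htan i s hs)
  set G : Fin N → Fin N → ℝ → ℝ := fun i j s =>
    ψ (enorm3 (x i s - x j s)) / N^2 *
      ((v j s ⬝ᵥ v j s) + (v i s ⬝ᵥ v i s)
        - 2 * ((x j s ⬝ᵥ x i s) * (v i s ⬝ᵥ v j s) - (x i s ⬝ᵥ v j s) * (v i s ⬝ᵥ x j s)
          + ((cross3 (x j s) (x i s) ⬝ᵥ v j s) * (v i s ⬝ᵥ cross3 (x j s) (x i s)))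
              / (1 + x j s ⬝ᵥ x i s))) with hG
  have hGeq : ∀ (i j : Fin N) (s : ℝ), 0 ≤ s →
      ψ (enorm3 (x i s - x j s)) / N^2 *
        (enorm3 (rotApply (x j s) (x i s) (v j s) - v i s))^2 = G i j s := by
    intro i j s hs
    rw [hnormS i j s hs, hdotR i j s hs, hG]
  have hxc : ∀ i, ContinuousOn (x i) (Icc 0 t) :=
    fun i s hs => ((hode1 i s hs.1).continuousAt).continuousWithinAt
  have hvc : ∀ i, ContinuousOn (v i) (Icc 0 t) :=
    fun i s hs => ((hode2 i s hs.1).continuousAt).continuousWithinAt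
  have hcm1 : ∀ (i j : Fin N) (s : ℝ), 0 ≤ s → -1 < x j s ⬝ᵥ x i s := by
    intro i j s hs
    have hsum := ED.dot_self_nonneg3 (x j s + x i s)
    rw [dotProduct_add, add_dotProduct, add_dotProduct, hXX j s hs, hXX i s hs,
      dotProduct_comm (x i s) (x j s)] at hsum
    rcases lt_or_eq_of_le (by linarith : (-1:ℝ) ≤ x j s ⬝ᵥ x i s) with h | h
    · exact h
    · exfalso
      apply hanti j i s hs
      apply eq_neg_of_add_eq_zero_left
      apply ED.eq_of_dot_self_eq_zero
      rw [dotProduct_add, add_dotProduct, add_dotProduct, hXX j s hs, hXX i s hs,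
        dotProduct_comm (x i s) (x j s), ← h]
      ring
  have hGcont : ∀ i j, ContinuousOn (G i j) (Icc 0 t) := by
    intro i j
    have hnc : ContinuousOn (fun u => enorm3 (x i u - x j u)) (Icc 0 t) := by
      have hd : ContinuousOn (fun u => (x i u - x j u) ⬝ᵥ (x i u - x j u)) (Icc 0 t) :=
        ED.contOn_dot ((hxc i).sub (hxc j)) ((hxc i).sub (hxc j))
      exact Real.continuous_sqrt.comp_continuousOn hd
    have hmaps : MapsTo (fun u => enorm3 (x i u - x j u)) (Icc 0 t) (Icc 0 2) := by
      intro s hs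
      refine ⟨Real.sqrt_nonneg _, ?_⟩
      have hdle : (x i s - x j s) ⬝ᵥ (x i s - x j s) ≤ 4 := by
        rw [dotProduct_sub, sub_dotProduct, sub_dotProduct, hXX i s hs.1, hXX j s hs.1,
          dotProduct_comm (x j s) (x i s)]
        have := hcm1 j i s hs.1
        linarith
      calc enorm3 (x i s - x j s) ≤ Real.sqrt 4 := Real.sqrt_le_sqrt hdle
        _ = 2 := by rw [show (4:ℝ) = 2^2 by norm_num, Real.sqrt_sq (by norm_num)]
    have hpsic : ContinuousOn (fun u => ψ (enorm3 (x i u - x j u))) (Icc 0 t) :=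
      hψreg.continuousOn.comp hnc hmaps
    have hden : ContinuousOn (fun u => 1 + x j u ⬝ᵥ x i u) (Icc 0 t) :=
      continuousOn_const.add (ED.contOn_dot (hxc j) (hxc i))
    have hdenne : ∀ s ∈ Icc (0:ℝ) t, 1 + x j s ⬝ᵥ x i s ≠ 0 := by
      intro s hs
      have := hcm1 i j s hs.1
      intro h; linarith
    rw [hG]
    apply ContinuousOn.mul
    · exact hpsic.div_const _
    · apply ContinuousOn.sub
      · exact (ED.contOn_dot (hvc j) (hvc j)).add (ED.contOn_dot (hvc i) (hvc i))
      · apply continuousOn_const.mul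
        apply ContinuousOn.add
        · exact ((ED.contOn_dot (hxc j) (hxc i)).mul (ED.contOn_dot (hvc i) (hvc j))).sub
            ((ED.contOn_dot (hxc i) (hvc j)).mul (ED.contOn_dot (hvc i) (hxc j)))
        · apply ContinuousOn.div
          · exact (ED.contOn_dot (ED.contOn_cross (hxc j) (hxc i)) (hvc j)).mul
              (ED.contOn_dot (hvc i) (ED.contOn_cross (hxc j) (hxc i)))
          · exact hden
          · exact hdenne
  have huIcc : uIcc (0:ℝ) t = Icc 0 t := uIcc_of_le ht
  have hint : ∀ i j, IntervalIntegrable (G i j) MeasureTheory.volume 0 t := by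
    intro i j
    apply ContinuousOn.intervalIntegrable
    rw [huIcc]; exact hGcont i j
  have hintsum : ∀ i, IntervalIntegrable (fun s => ∑ j, G i j s) MeasureTheory.volume 0 t := by
    intro i
    apply ContinuousOn.intervalIntegrable
    rw [huIcc]
    exact continuousOn_finset_sum _ fun j _ => hGcont i j
  have hDcont : ContinuousOn (fun s => -(∑ i, ∑ j, G i j s)) (Icc 0 t) :=
    (continuousOn_finset_sum _ fun i _ => continuousOn_finset_sum _ fun j _ => hGcont i j).neg
  have hEderiv : ∀ s ∈ uIcc (0:ℝ) t, HasDerivAt E (-(∑ i, ∑ j, G i j s)) s := by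
    intro s hs
    rw [huIcc] at hs
    have h := hderiv s hs.1
    have heq : (∑ i, ∑ j, ψ (enorm3 (x i s - x j s)) / N^2 *
        (enorm3 (rotApply (x j s) (x i s) (v j s) - v i s))^2) = ∑ i, ∑ j, G i j s :=
      Finset.sum_congr rfl fun i _ => Finset.sum_congr rfl fun j _ => hGeq i j s hs.1
    rw [← heq]
    exact h
  have hDint : IntervalIntegrable (fun s => -(∑ i, ∑ j, G i j s)) MeasureTheory.volume 0 t := by
    apply ContinuousOn.intervalIntegrable
    rw [huIcc]; exact hDcont
  have hFTC := intervalIntegral.integral_eq_sub_of_hasDerivAt hEderiv hDint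
  rw [intervalIntegral.integral_neg] at hFTC
  have hsum : ∑ i, ∑ j, (∫ s in (0:ℝ)..t, ψ (enorm3 (x i s - x j s)) / N^2 *
      (enorm3 (rotApply (x j s) (x i s) (v j s) - v i s))^2)
      = ∫ s in (0:ℝ)..t, ∑ i, ∑ j, G i j s := by
    calc ∑ i, ∑ j, (∫ s in (0:ℝ)..t, ψ (enorm3 (x i s - x j s)) / N^2 *
          (enorm3 (rotApply (x j s) (x i s) (v j s) - v i s))^2)
        = ∑ i, ∑ j, (∫ s in (0:ℝ)..t, G i j s) := by
          refine Finset.sum_congr rfl fun i _ => Finset.sum_congr rfl fun j _ => ?_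
          apply intervalIntegral.integral_congr
          intro s hs
          rw [huIcc] at hs
          exact hGeq i j s hs.1
      _ = ∑ i, ∫ s in (0:ℝ)..t, ∑ j, G i j s := by
          refine Finset.sum_congr rfl fun i _ => ?_
          exact (intervalIntegral.integral_finset_sum (fun j _ => hint i j)).symm
      _ = ∫ s in (0:ℝ)..t, ∑ i, ∑ j, G i j s :=
          (intervalIntegral.integral_finset_sum (fun i _ => hintsum i)).symm
  rw [hsum]
  have : ∫ s in (0:ℝ)..t, ∑ i, ∑ j, G i j s = E 0 - E t := by linarith
  rw [this]
  linarith
end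
end

section
/- Let x_i, x_j, x_k be unit vectors in ℝ³ with x_k ≠ ±x_i and x_k ≠ ±x_j, and let v ∈ ℝ³. Then ‖R_{x_k→x_i}(v) − R_{x_k→x_j}(v)‖ ≤ 2‖v‖ ‖x_i − x_j‖ + (‖v‖/2) ‖x_i − x_k‖² + (‖v‖/2) ‖x_j − x_k‖². -/
open Matrix Set
open scoped BigOperators

noncomputable section

def toE3 (a : Fin 3 → ℝ) : EuclideanSpace ℝ (Fin 3) := (WithLp.equiv 2 (Fin 3 → ℝ)).symm a

lemma enorm3_eq_norm (a : Fin 3 → ℝ) : enorm3 a = ‖toE3 a‖ := by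
  rw [EuclideanSpace.norm_eq]
  unfold enorm3
  congr 1
  simp [dotProduct, toE3, Real.norm_eq_abs, sq_abs, sq]

lemma dot_eq_inner (a b : Fin 3 → ℝ) : a ⬝ᵥ b = inner ℝ (toE3 a) (toE3 b) := by
  simp [PiLp.inner_apply, RCLike.inner_apply, dotProduct, toE3, mul_comm]

lemma enorm3_nonneg (a : Fin 3 → ℝ) : 0 ≤ enorm3 a := Real.sqrt_nonneg _

lemma enorm3_add_le (a b : Fin 3 → ℝ) : enorm3 (a + b) ≤ enorm3 a + enorm3 b := by
  rw [enorm3_eq_norm, enorm3_eq_norm, enorm3_eq_norm]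
  exact norm_add_le (toE3 a) (toE3 b)

lemma enorm3_neg (a : Fin 3 → ℝ) : enorm3 (-a) = enorm3 a := by
  rw [enorm3_eq_norm, enorm3_eq_norm]; exact norm_neg (toE3 a)

lemma enorm3_smul (t : ℝ) (a : Fin 3 → ℝ) : enorm3 (t • a) = |t| * enorm3 a := by
  rw [enorm3_eq_norm, enorm3_eq_norm]
  show ‖t • toE3 a‖ = _
  rw [norm_smul, Real.norm_eq_abs]

lemma enorm3_sq (a : Fin 3 → ℝ) : (enorm3 a)^2 = a ⬝ᵥ a := by
  rw [enorm3_eq_norm, dot_eq_inner, real_inner_self_eq_norm_sq]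

lemma abs_dot_le (a b : Fin 3 → ℝ) : |a ⬝ᵥ b| ≤ enorm3 a * enorm3 b := by
  rw [enorm3_eq_norm, enorm3_eq_norm, dot_eq_inner]
  exact abs_real_inner_le_norm _ _

lemma dot_self_eq_zero_iff (a : Fin 3 → ℝ) : a ⬝ᵥ a = 0 ↔ a = 0 := by
  rw [dot_eq_inner, inner_self_eq_zero]
  constructor
  · intro h; exact (WithLp.equiv 2 (Fin 3 → ℝ)).symm.injective h
  · intro h; rw [h]; rfl

lemma lagrange (a b : Fin 3 → ℝ) :
    cross3 a b ⬝ᵥ cross3 a b = (a ⬝ᵥ a) * (b ⬝ᵥ b) - (a ⬝ᵥ b)^2 := by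
  simp [cross3, dotProduct, Fin.sum_univ_three]
  ring

lemma proj_le (u v : Fin 3 → ℝ) (hu : u ⬝ᵥ u = 1) :
    enorm3 ((u ⬝ᵥ v) • u - v) ≤ enorm3 v := by
  unfold enorm3
  apply Real.sqrt_le_sqrt
  simp only [sub_dotProduct, dotProduct_sub, smul_dotProduct, dotProduct_smul, smul_eq_mul, hu]
  rw [dotProduct_comm v u]
  nlinarith [sq_nonneg (u ⬝ᵥ v)]

lemma dot_self_one (a : Fin 3 → ℝ) (h : enorm3 a = 1) : a ⬝ᵥ a = 1 := by
  have := enorm3_sq a; rw [h] at this; linarith [this]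

lemma uvec3_unit (z₁ z₂ : Fin 3 → ℝ) (h1 : enorm3 z₁ = 1) (h2 : enorm3 z₂ = 1)
    (hne : z₁ ≠ z₂) (hne' : z₁ ≠ -z₂) : uvec3 z₁ z₂ ⬝ᵥ uvec3 z₁ z₂ = 1 := by
  have hz1 : z₁ ⬝ᵥ z₁ = 1 := dot_self_one z₁ h1
  have hz2 : z₂ ⬝ᵥ z₂ = 1 := dot_self_one z₂ h2
  have habs : |z₁ ⬝ᵥ z₂| ≤ 1 := by
    have := abs_dot_le z₁ z₂; rw [h1, h2] at this; linarith
  have hne1 : z₁ ⬝ᵥ z₂ ≠ 1 := by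
    intro h
    apply hne
    have hz : (z₁ - z₂) ⬝ᵥ (z₁ - z₂) = 0 := by
      simp only [sub_dotProduct, dotProduct_sub, hz1, hz2, h, dotProduct_comm z₂ z₁]
      ring
    have := (dot_self_eq_zero_iff (z₁ - z₂)).1 hz
    exact sub_eq_zero.1 this
  have hne2 : z₁ ⬝ᵥ z₂ ≠ -1 := by
    intro h
    apply hne'
    have hz : (z₁ + z₂) ⬝ᵥ (z₁ + z₂) = 0 := by
      simp only [add_dotProduct, dotProduct_add, hz1, hz2, h, dotProduct_comm z₂ z₁]
      ring
    exact eq_neg_of_add_eq_zero_left ((dot_self_eq_zero_iff (z₁ + z₂)).1 hz)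
  have habs' : |z₁ ⬝ᵥ z₂| < 1 := by
    rcases lt_or_eq_of_le habs with h | h
    · exact h
    · rcases (abs_eq (by norm_num : (0:ℝ) ≤ 1)).1 h with h' | h'
      · exact absurd h' hne1
      · exact absurd h' hne2
  have hcross : cross3 z₁ z₂ ⬝ᵥ cross3 z₁ z₂ = 1 - (z₁ ⬝ᵥ z₂)^2 := by
    rw [lagrange, hz1, hz2]; ring
  have hpos : 0 < cross3 z₁ z₂ ⬝ᵥ cross3 z₁ z₂ := by
    rw [hcross]
    nlinarith [abs_lt.1 habs']
  have hen : enorm3 (cross3 z₁ z₂) = Real.sqrt (cross3 z₁ z₂ ⬝ᵥ cross3 z₁ z₂) := rfl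
  unfold uvec3
  simp only [smul_dotProduct, dotProduct_smul, smul_eq_mul, hen]
  rw [← mul_assoc, ← mul_inv, Real.mul_self_sqrt hpos.le, inv_mul_cancel₀ (ne_of_gt hpos)]

lemma vecMulVec_mulVec' (a b v : Fin 3 → ℝ) : (vecMulVec a b) *ᵥ v = (b ⬝ᵥ v) • a := by
  funext i
  simp [vecMulVec_apply, Matrix.mulVec, dotProduct, Finset.sum_mul, Finset.mul_sum,
    Fin.sum_univ_three]
  ring

lemma rot_mulVec (z₁ z₂ v : Fin 3 → ℝ) :
    (rotMatrix z₁ z₂) *ᵥ v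
      = (z₁ ⬝ᵥ z₂) • v + (z₁ ⬝ᵥ v) • z₂ - (z₂ ⬝ᵥ v) • z₁
        + (1 - z₁ ⬝ᵥ z₂) • ((uvec3 z₁ z₂ ⬝ᵥ v) • uvec3 z₁ z₂) := by
  unfold rotMatrix
  rw [add_mulVec, sub_mulVec, add_mulVec, smul_mulVec, one_mulVec,
    smul_mulVec, vecMulVec_mulVec', vecMulVec_mulVec', vecMulVec_mulVec']

lemma rot_err (z₁ z₂ v : Fin 3 → ℝ) (h1 : enorm3 z₁ = 1) (h2 : enorm3 z₂ = 1)
    (hne : z₁ ≠ z₂) (hne' : z₁ ≠ -z₂) :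
    enorm3 (rotApply z₁ z₂ v - (v + (z₁ ⬝ᵥ v) • z₂ - (z₂ ⬝ᵥ v) • z₁))
      ≤ enorm3 v / 2 * (enorm3 (z₂ - z₁))^2 := by
  have hz1 : z₁ ⬝ᵥ z₁ = 1 := dot_self_one z₁ h1
  have hz2 : z₂ ⬝ᵥ z₂ = 1 := dot_self_one z₂ h2
  have hu : uvec3 z₁ z₂ ⬝ᵥ uvec3 z₁ z₂ = 1 := uvec3_unit z₁ z₂ h1 h2 hne hne'
  have hc_le : z₁ ⬝ᵥ z₂ ≤ 1 := by
    have := abs_dot_le z₁ z₂; rw [h1, h2] at this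
    calc z₁ ⬝ᵥ z₂ ≤ |z₁ ⬝ᵥ z₂| := le_abs_self _
    _ ≤ 1 := by linarith
  have hsq : (enorm3 (z₂ - z₁))^2 = 2 - 2 * (z₁ ⬝ᵥ z₂) := by
    rw [enorm3_sq]
    simp only [sub_dotProduct, dotProduct_sub, hz1, hz2, dotProduct_comm z₂ z₁]
    ring
  rw [rotApply, if_neg hne, rot_mulVec]
  have hdiff : (z₁ ⬝ᵥ z₂) • v + (z₁ ⬝ᵥ v) • z₂ - (z₂ ⬝ᵥ v) • z₁
        + (1 - z₁ ⬝ᵥ z₂) • ((uvec3 z₁ z₂ ⬝ᵥ v) • uvec3 z₁ z₂)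
        - (v + (z₁ ⬝ᵥ v) • z₂ - (z₂ ⬝ᵥ v) • z₁)
      = (1 - z₁ ⬝ᵥ z₂) • ((uvec3 z₁ z₂ ⬝ᵥ v) • uvec3 z₁ z₂ - v) := by
    module
  rw [hdiff, enorm3_smul, abs_of_nonneg (by linarith)]
  have hproj := proj_le (uvec3 z₁ z₂) v hu
  have h1c : (0:ℝ) ≤ 1 - z₁ ⬝ᵥ z₂ := by linarith
  calc (1 - z₁ ⬝ᵥ z₂) * enorm3 ((uvec3 z₁ z₂ ⬝ᵥ v) • uvec3 z₁ z₂ - v)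
      ≤ (1 - z₁ ⬝ᵥ z₂) * enorm3 v := by
        exact mul_le_mul_of_nonneg_left hproj h1c
    _ = enorm3 v / 2 * (enorm3 (z₂ - z₁))^2 := by rw [hsq]; ring

/-- For unit vectors `x_i, x_j, x_k` with `x_k ≠ ±x_i`, `x_k ≠ ±x_j`,
`‖R_{x_k→x_i}(v) − R_{x_k→x_j}(v)‖
  ≤ 2‖v‖‖x_i−x_j‖ + (‖v‖/2)‖x_i−x_k‖² + (‖v‖/2)‖x_j−x_k‖²`. -/
theorem rot_difference_bound (xi xj xk : Fin 3 → ℝ)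
    (hxi : enorm3 xi = 1) (hxj : enorm3 xj = 1) (hxk : enorm3 xk = 1)
    (h1 : xk ≠ xi) (h2 : xk ≠ -xi) (h3 : xk ≠ xj) (h4 : xk ≠ -xj)
    (v : Fin 3 → ℝ) :
    enorm3 (rotApply xk xi v - rotApply xk xj v)
      ≤ 2 * enorm3 v * enorm3 (xi - xj)
        + enorm3 v / 2 * (enorm3 (xi - xk))^2
        + enorm3 v / 2 * (enorm3 (xj - xk))^2 := by
  set X := rotApply xk xi v with hX
  set Y := rotApply xk xj v with hY
  set Ei := X - (v + (xk ⬝ᵥ v) • xi - (xi ⬝ᵥ v) • xk) with hEi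
  set Ej := Y - (v + (xk ⬝ᵥ v) • xj - (xj ⬝ᵥ v) • xk) with hEj
  set M := (xk ⬝ᵥ v) • (xi - xj) - ((xi - xj) ⬝ᵥ v) • xk with hM
  have key : X - Y = Ei + M + (-Ej) := by
    rw [hEi, hEj, hM, sub_dotProduct]
    module
  have bEi : enorm3 Ei ≤ enorm3 v / 2 * (enorm3 (xi - xk))^2 :=
    rot_err xk xi v hxk hxi h1 h2
  have bEj : enorm3 Ej ≤ enorm3 v / 2 * (enorm3 (xj - xk))^2 :=
    rot_err xk xj v hxk hxj h3 h4
  have bM : enorm3 M ≤ 2 * enorm3 v * enorm3 (xi - xj) := by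
    have t1 : enorm3 M ≤ enorm3 ((xk ⬝ᵥ v) • (xi - xj)) + enorm3 (-(((xi - xj) ⬝ᵥ v) • xk)) := by
      rw [hM, sub_eq_add_neg]
      exact enorm3_add_le _ _
    rw [enorm3_neg, enorm3_smul, enorm3_smul] at t1
    have c1 : |xk ⬝ᵥ v| ≤ enorm3 v := by
      have := abs_dot_le xk v; rw [hxk] at this; linarith
    have c2 : |(xi - xj) ⬝ᵥ v| ≤ enorm3 (xi - xj) * enorm3 v := abs_dot_le _ v
    have n1 : 0 ≤ enorm3 (xi - xj) := enorm3_nonneg _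
    have n2 : 0 ≤ enorm3 v := enorm3_nonneg _
    nlinarith [abs_nonneg ((xi - xj) ⬝ᵥ v), abs_nonneg (xk ⬝ᵥ v), hxk]
  calc enorm3 (X - Y) = enorm3 (Ei + M + (-Ej)) := by rw [key]
    _ ≤ enorm3 (Ei + M) + enorm3 (-Ej) := enorm3_add_le _ _
    _ ≤ enorm3 Ei + enorm3 M + enorm3 (-Ej) := by
        linarith [enorm3_add_le Ei M]
    _ ≤ _ := by rw [enorm3_neg]; linarith
end
end

section
/- Let ψ₀ > 0 and σ > 0, and let A be the real 3×3 matrix with rows (0, 2, 0), (−σ, −ψ₀, 1), (0, −2σ, −2ψ₀). Then the complex eigenvalues of A are exactly −ψ₀, −ψ₀ + w, and −ψ₀ − w, where w ∈ ℂ satisfies w² = ψ₀² − 4σ. Moreover, every complex eigenvalue λ of A satisfies Re λ ≤ −ψ₀ when ψ₀² ≤ 4σ, and Re λ ≤ −2σ/ψ₀ when ψ₀² > 4σ; in particular, every eigenvalue of A has strictly negative real part. -/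
open Matrix
open scoped BigOperators

noncomputable section

/-- The eigenvalues of the matrix
`A = !![0, 2, 0; −σ, −ψ₀, 1; 0, −2σ, −2ψ₀]` (regarded over `ℂ`) are exactly
`−ψ₀`, `−ψ₀ + w`, `−ψ₀ − w` where `w² = ψ₀² − 4σ`; every eigenvalue has real part
`≤ −ψ₀` if `ψ₀² ≤ 4σ`, real part `≤ −2σ/ψ₀` if `ψ₀² > 4σ`, and in particular
strictly negative real part. -/
theorem eigenvalues_of_A (ψ₀ σ : ℝ) (hψ₀ : 0 < ψ₀) (hσ : 0 < σ)
    (A : Matrix (Fin 3) (Fin 3) ℂ)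
    (hA : A = !![0, 2, 0;
                 -(σ : ℂ), -(ψ₀ : ℂ), 1;
                 0, -2 * (σ : ℂ), -2 * (ψ₀ : ℂ)]) :
    (∀ w : ℂ, w ^ 2 = (ψ₀ : ℂ) ^ 2 - 4 * (σ : ℂ) →
      spectrum ℂ A = {-(ψ₀ : ℂ), -(ψ₀ : ℂ) + w, -(ψ₀ : ℂ) - w}) ∧
    (ψ₀ ^ 2 ≤ 4 * σ → ∀ lam ∈ spectrum ℂ A, lam.re ≤ -ψ₀) ∧
    (4 * σ < ψ₀ ^ 2 → ∀ lam ∈ spectrum ℂ A, lam.re ≤ -(2 * σ / ψ₀)) ∧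
    (∀ lam ∈ spectrum ℂ A, lam.re < 0) := by
  -- membership characterization
  have hmem : ∀ μ : ℂ, μ ∈ spectrum ℂ A ↔
      (μ + ψ₀) * (μ ^ 2 + 2 * ψ₀ * μ + 4 * σ) = 0 := by
    intro μ
    rw [spectrum.mem_iff, Matrix.isUnit_iff_isUnit_det, isUnit_iff_ne_zero, not_not]
    have hM : algebraMap ℂ (Matrix (Fin 3) (Fin 3) ℂ) μ - A =
        !![μ, -2, 0; (σ:ℂ), μ + ψ₀, -1; 0, 2*σ, μ + 2*ψ₀] := by
      ext i j
      fin_cases i <;> fin_cases j <;>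
        simp [hA, Matrix.algebraMap_matrix_apply] <;> ring
    have hdet : (!![μ, -2, 0; (σ:ℂ), μ + ψ₀, -1; 0, 2*σ, μ + 2*ψ₀]).det
        = (μ + ψ₀) * (μ ^ 2 + 2 * ψ₀ * μ + 4 * σ) := by
      simp [Matrix.det_fin_three]; ring
    rw [hM, hdet]
  -- re/im of quadratic roots
  have hrei : ∀ lam : ℂ, lam ^ 2 + 2 * ψ₀ * lam + 4 * σ = 0 →
      (lam.re * lam.re - lam.im * lam.im + 2 * ψ₀ * lam.re + 4 * σ = 0 ∧
       2 * lam.im * (lam.re + ψ₀) = 0) := by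
    intro lam h
    have hre := congrArg Complex.re h
    have him := congrArg Complex.im h
    simp [pow_two, Complex.mul_re, Complex.mul_im] at hre him
    exact ⟨by linarith, by linarith⟩
  -- bound 1
  have hb1 : ψ₀ ^ 2 ≤ 4 * σ → ∀ lam ∈ spectrum ℂ A, lam.re ≤ -ψ₀ := by
    intro h4 lam hlam
    rcases mul_eq_zero.mp ((hmem lam).mp hlam) with h | h
    · have : lam = -ψ₀ := by linear_combination h
      simp [this]
    · obtain ⟨hre, him⟩ := hrei lam h
      rcases mul_eq_zero.mp him with h0 | h0
      · have h0' : lam.im = 0 := by linarith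
        nlinarith [sq_nonneg (lam.re + ψ₀)]
      · linarith
  -- bound 2
  have hb2 : 4 * σ < ψ₀ ^ 2 → ∀ lam ∈ spectrum ℂ A, lam.re ≤ -(2 * σ / ψ₀) := by
    intro h4 lam hlam
    have hdiv : 2 * σ / ψ₀ * ψ₀ = 2 * σ := div_mul_cancel₀ _ (ne_of_gt hψ₀)
    rcases mul_eq_zero.mp ((hmem lam).mp hlam) with h | h
    · have hl : lam = -ψ₀ := by linear_combination h
      rw [hl]
      simp only [Complex.neg_re, Complex.ofReal_re]
      nlinarith
    · obtain ⟨hre, him⟩ := hrei lam h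
      rcases mul_eq_zero.mp him with h0 | h0
      · have h0' : lam.im = 0 := by linarith
        -- real root: 2*ψ₀*x + 4σ = -x² ≤ 0
        nlinarith [sq_nonneg lam.re]
      · -- im ≠ 0 forces re = -ψ₀, then im² = 4σ - ψ₀² < 0 contradiction unless im = 0
        have hx : lam.re = -ψ₀ := by linarith
        rw [hx]
        nlinarith
  refine ⟨?_, hb1, hb2, ?_⟩
  · intro w hw
    ext μ
    rw [hmem μ]
    have key : (μ + ψ₀) * (μ ^ 2 + 2 * ψ₀ * μ + 4 * σ)
        = (μ + ψ₀) * ((μ - (-ψ₀ + w)) * (μ - (-ψ₀ - w))) := by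
      linear_combination ((μ : ℂ) + ψ₀) * hw
    rw [key, mul_eq_zero, mul_eq_zero]
    simp only [Set.mem_insert_iff, Set.mem_singleton_iff, sub_eq_zero]
    constructor
    · rintro (h | h | h)
      · exact Or.inl (by linear_combination h)
      · exact Or.inr (Or.inl h)
      · exact Or.inr (Or.inr h)
    · rintro (h | h | h)
      · exact Or.inl (by rw [h]; ring)
      · exact Or.inr (Or.inl h)
      · exact Or.inr (Or.inr h)
  · intro lam hlam
    rcases le_or_gt (ψ₀ ^ 2) (4 * σ) with h4 | h4
    · have := hb1 h4 lam hlam; linarith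
    · have := hb2 h4 lam hlam
      have : lam.re ≤ -(2 * σ / ψ₀) := this
      have hpos : 0 < 2 * σ / ψ₀ := by positivity
      linarith
end
end
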